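/- arXiv:1407.2171 — 3 statements merged into one kernel-verified Lean document; each statement's English description precedes it below -/
import Mathlib

section
/- There exists an absolute constant c > 0 such that for every compact connected subset K of the unit disk D and every 0 < ε < 1: if the pseudo-hyperbolic diameter of K is greater than 1 − ε, then capa(K) ≥ c · log(1/ε), where capa(K) is the Green capacity of K in D. -/
open MeasureTheory Set Filter
open scoped ENNReal NNReal

noncomputable section

/-- The open unit disk in the complex plane. -/
def unitDisk : Set ℂ := {z : ℂ | ‖z‖ < 1}

/-- The Green function of the unit disk, `g(z,w) = log |(1 - w̄ z)/(z - w)|`,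
with value `⊤` on the diagonal. -/
def greenFnE (z w : ℂ) : ℝ≥0∞ :=
  if z = w then ⊤ else ENNReal.ofReal (Real.log ‖(1 - (starRingEnd ℂ) w * z) / (z - w)‖)

/-- The Green energy `I(μ) = ∬ g(z,w) dμ(z) dμ(w)` of a measure. -/
def greenEnergy (μ : Measure ℂ) : ℝ≥0∞ := ∫⁻ z, ∫⁻ w, greenFnE z w ∂μ ∂μ

/-- `greenV E = V(E)`: the infimum of energies of probability measures supported by a
compact subset of `E`. -/
def greenV (E : Set ℂ) : ℝ≥0∞ :=
  ⨅ (μ : Measure ℂ) (_ : IsProbabilityMeasure μ)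
    (_ : ∃ K : Set ℂ, K ⊆ E ∧ IsCompact K ∧ μ Kᶜ = 0), greenEnergy μ

/-- The Green capacity `capa(E) = 1/V(E)` of `E` in the unit disk. -/
def greenCapa (E : Set ℂ) : ℝ≥0∞ := (greenV E)⁻¹

/-- `e^{-1/capa(E)} = e^{-V(E)}`, with the value `0` when `V(E) = ∞` (i.e. `capa(E) = 0`). -/
def expNegV (E : Set ℂ) : ℝ :=
  if greenV E = ⊤ then 0 else Real.exp (-(greenV E).toReal)

/-- The pseudo-hyperbolic distance on the unit disk. -/
def pseudoDist (z w : ℂ) : ℝ := ‖(z - w) / (1 - (starRingEnd ℂ) z * w)‖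

/-- The pseudo-hyperbolic diameter of a set. -/
def pseudoDiam (E : Set ℂ) : ℝ :=
  sSup {d : ℝ | ∃ z ∈ E, ∃ w ∈ E, d = pseudoDist z w}

/-- The `n`-th approximation number `a_n(T) = inf {‖T - R‖ : rank R < n}`. -/
def approxNumber {E F : Type*} [NormedAddCommGroup E] [NormedAddCommGroup F]
    [NormedSpace ℂ E] [NormedSpace ℂ F] (T : E →L[ℂ] F) (n : ℕ) : ℝ :=
  sInf {c : ℝ | ∃ R : E →L[ℂ] F,
    Module.rank ℂ (LinearMap.range (R : E →ₗ[ℂ] F)) < (n : Cardinal) ∧ c = ‖T - R‖}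

/-- The squared norm `‖f‖² = |f(0)|² + ∫_D |f'|² ω dA` (normalized area measure) of the
weighted analytic Hilbert space `H_ω`. -/
def hwNormSq (ω : ℝ → ℝ) (f : ℂ → ℂ) : ℝ :=
  ‖f 0‖ ^ 2 + (∫ z in unitDisk, ‖deriv f z‖ ^ 2 * ω ‖z‖) / Real.pi

/-- Membership in the weighted analytic Hilbert space `H_ω`. -/
def memHw (ω : ℝ → ℝ) (f : ℂ → ℂ) : Prop :=
  DifferentiableOn ℂ f unitDisk ∧
    IntegrableOn (fun z => ‖deriv f z‖ ^ 2 * ω ‖z‖) unitDisk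

/-- The coefficient weights `w_0 = 1`, `w_n = 2 n² ∫_0^1 r^{2n-1} ω(r) dr`. -/
def wcoef (ω : ℝ → ℝ) (n : ℕ) : ℝ :=
  if n = 0 then 1 else 2 * (n : ℝ) ^ 2 * ∫ r in (0:ℝ)..1, r ^ (2 * n - 1) * ω r

/-- Taylor coefficient of `f` at `0`. -/
def taylorCoeff (f : ℂ → ℂ) (n : ℕ) : ℂ := iteratedDeriv n f 0 / (n.factorial : ℂ)

/-- `(1/2π) ∫_0^{2π} |f(r e^{it})|^p dt`. -/
def hpMean (p : ℝ) (f : ℂ → ℂ) (r : ℝ) : ℝ :=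
  (1 / (2 * Real.pi)) *
    ∫ t in (0:ℝ)..(2 * Real.pi), ‖f ((r : ℂ) * Complex.exp ((t : ℂ) * Complex.I))‖ ^ p

/-- The `H^p` norm. -/
def hpNorm (p : ℝ) (f : ℂ → ℂ) : ℝ :=
  sSup {m : ℝ | ∃ r ∈ Set.Ioo (0:ℝ) 1, m = hpMean p f r ^ (1 / p)}

/-- Membership in the Hardy space `H^p`. -/
def memHp (p : ℝ) (f : ℂ → ℂ) : Prop :=
  DifferentiableOn ℂ f unitDisk ∧
    BddAbove {m : ℝ | ∃ r ∈ Set.Ioo (0:ℝ) 1, m = hpMean p f r ^ (1 / p)}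

/-- The squared `H²` norm `‖f‖² = Σ |b_n|²` in terms of Taylor coefficients. -/
def h2NormSq (f : ℂ → ℂ) : ℝ := ∑' n : ℕ, ‖taylorCoeff f n‖ ^ 2

/-- Membership in the Hardy space `H²`. -/
def memH2 (f : ℂ → ℂ) : Prop :=
  DifferentiableOn ℂ f unitDisk ∧ Summable (fun n : ℕ => ‖taylorCoeff f n‖ ^ 2)

/-- The `n`-th Kolmogorov number. -/
def kolmogorovNumber {E F : Type*} [NormedAddCommGroup E] [NormedAddCommGroup F]
    [NormedSpace ℂ E] [NormedSpace ℂ F] (T : E →L[ℂ] F) (n : ℕ) : ℝ :=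
  ⨅ (S : Submodule ℂ F) (_ : Module.rank ℂ S < (n : Cardinal)),
    ⨆ x : {x : E // ‖x‖ ≤ 1}, Metric.infDist (T (x : E)) (S : Set F)

/-- The `n`-th Gelfand number: infimum of norms of restrictions of `T` to closed
subspaces of codimension `< n`. -/
def gelfandNumber {X : Type*} [NormedAddCommGroup X] [NormedSpace ℂ X]
    (T : X →L[ℂ] X) (n : ℕ) : ℝ :=
  ⨅ (F : Submodule ℂ X) (_ : IsClosed (F : Set X))
    (_ : Module.rank ℂ (X ⧸ F) < (n : Cardinal)),
    ⨆ x : {x : X // x ∈ F ∧ ‖x‖ ≤ 1}, ‖T (x : X)‖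

/-- `ε_n(T) = inf_{dim E < n} sup_{x ∈ B_X} dist (T x, T(E))`. -/
def epsApprox {X : Type*} [NormedAddCommGroup X] [NormedSpace ℂ X]
    (T : X →L[ℂ] X) (n : ℕ) : ℝ :=
  ⨅ (E : Submodule ℂ X) (_ : Module.rank ℂ E < (n : Cardinal)),
    ⨆ x : {x : X // ‖x‖ ≤ 1}, Metric.infDist (T (x : X)) (T '' (E : Set X))



section AuxPD
open Complex


lemma den_ne {z w : ℂ} (hz : ‖z‖ < 1) (hw : ‖w‖ < 1) :
    (1 : ℂ) - (starRingEnd ℂ) z * w ≠ 0 := by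
  intro h
  have h1 : (1:ℂ) = (starRingEnd ℂ) z * w := by linear_combination h
  have h2 : ‖(starRingEnd ℂ) z * w‖ < 1 := by
    rw [norm_mul, RCLike.norm_conj]
    nlinarith [norm_nonneg z, norm_nonneg w]
  rw [← h1] at h2; simp at h2

lemma normsq_expand (z w : ℂ) :
    ‖z - w‖^2 = ‖z‖^2 + ‖w‖^2 - 2*(z.re*w.re + z.im*w.im) ∧
    ‖(1:ℂ) - (starRingEnd ℂ) z * w‖^2 = 1 + ‖z‖^2*‖w‖^2 - 2*(z.re*w.re + z.im*w.im)
      + ((z.re*w.im - z.im*w.re)^2 - (‖z‖^2*‖w‖^2 - (z.re*w.re + z.im*w.im)^2)) := by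
  have h1 : ∀ u : ℂ, ‖u‖^2 = u.re^2 + u.im^2 := by
    intro u
    rw [Complex.sq_norm, Complex.normSq_apply]; ring
  constructor
  · rw [h1, h1, h1]; simp [Complex.sub_re, Complex.sub_im]; ring
  · rw [h1, h1, h1]
    simp [Complex.sub_re, Complex.sub_im, Complex.mul_re, Complex.mul_im]
    ring

lemma cross_eq (z w : ℂ) :
    ‖z‖^2*‖w‖^2 - (z.re*w.re + z.im*w.im)^2 = (z.re*w.im - z.im*w.re)^2 := by
  have h1 : ∀ u : ℂ, ‖u‖^2 = u.re^2 + u.im^2 := by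
    intro u
    rw [Complex.sq_norm, Complex.normSq_apply]; ring
  rw [h1, h1]; ring

lemma x_le (z w : ℂ) : z.re*w.re + z.im*w.im ≤ ‖z‖ * ‖w‖ := by
  have h := Complex.re_le_norm ((starRingEnd ℂ) z * w)
  have h2 : ((starRingEnd ℂ) z * w).re = z.re*w.re + z.im*w.im := by
    simp [Complex.mul_re]
  rw [h2] at h
  calc z.re*w.re + z.im*w.im ≤ ‖(starRingEnd ℂ) z * w‖ := h
    _ = ‖(starRingEnd ℂ) z * w‖ := rfl
    _ = ‖z‖ * ‖w‖ := by rw [norm_mul, RCLike.norm_conj]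

lemma norm_sub_lt_den {z w : ℂ} (hz : ‖z‖ < 1) (hw : ‖w‖ < 1) :
    ‖z - w‖ < ‖(1:ℂ) - (starRingEnd ℂ) z * w‖ := by
  obtain ⟨h1, h2⟩ := normsq_expand z w
  have h3 := cross_eq z w
  have hz2 : ‖z‖^2 < 1 := by nlinarith [norm_nonneg z]
  have hw2 : ‖w‖^2 < 1 := by nlinarith [norm_nonneg w]
  have hd : ‖z-w‖^2 < ‖(1:ℂ) - (starRingEnd ℂ) z * w‖^2 := by
    rw [h1, h2]
    nlinarith [mul_pos (sub_pos.2 hz2) (sub_pos.2 hw2)]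
  nlinarith [norm_nonneg (z-w), norm_nonneg ((1:ℂ) - (starRingEnd ℂ) z * w)]

lemma pd_lt_one {z w : ℂ} (hz : ‖z‖ < 1) (hw : ‖w‖ < 1) : pseudoDist z w < 1 := by
  rw [pseudoDist, norm_div, div_lt_one]
  · exact norm_sub_lt_den hz hw
  · calc (0:ℝ) ≤ ‖z - w‖ := norm_nonneg _
      _ < _ := norm_sub_lt_den hz hw

lemma pd_key {z w : ℂ} (hz : ‖z‖ < 1) (hw : ‖w‖ < 1) :
    (‖w‖ - ‖z‖) / (1 - ‖z‖ * ‖w‖) ≤ pseudoDist z w := by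
  have hden : (0:ℝ) < 1 - ‖z‖ * ‖w‖ := by nlinarith [norm_nonneg z, norm_nonneg w]
  rw [div_le_iff₀ hden, pseudoDist, norm_div]
  rcases le_or_gt ‖w‖ ‖z‖ with h | h
  · have : (0:ℝ) ≤ ‖z - w‖ / ‖(1:ℂ) - (starRingEnd ℂ) z * w‖ := by positivity
    nlinarith
  · have hDpos : (0:ℝ) < ‖(1:ℂ) - (starRingEnd ℂ) z * w‖ :=
      norm_pos_iff.mpr (den_ne hz hw)
    rw [div_mul_eq_mul_div, le_div_iff₀ hDpos]
    obtain ⟨h1, h2⟩ := normsq_expand z w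
    have h3 := cross_eq z w
    set x := z.re*w.re + z.im*w.im with hx
    have hxle : x ≤ ‖z‖ * ‖w‖ := x_le z w
    have hsq : ((‖w‖ - ‖z‖) * ‖(1:ℂ) - (starRingEnd ℂ) z * w‖)^2
        ≤ (‖z - w‖ * (1 - ‖z‖ * ‖w‖))^2 := by
      have e1 : (‖z - w‖ * (1 - ‖z‖ * ‖w‖))^2
          = (‖z‖^2 + ‖w‖^2 - 2*x) * (1 - ‖z‖*‖w‖)^2 := by rw [mul_pow, h1]
      have e2 : ((‖w‖ - ‖z‖) * ‖(1:ℂ) - (starRingEnd ℂ) z * w‖)^2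
          = (‖w‖ - ‖z‖)^2 * (1 + ‖z‖^2*‖w‖^2 - 2*x) := by
        rw [mul_pow, h2, h3]; ring
      rw [e1, e2]
      nlinarith [mul_nonneg (mul_nonneg (sub_nonneg.2 hxle)
          (by nlinarith [norm_nonneg z] : (0:ℝ) ≤ 1 - ‖z‖^2))
          (by nlinarith [norm_nonneg w] : (0:ℝ) ≤ 1 - ‖w‖^2)]
    nlinarith [mul_nonneg (le_of_lt (sub_pos.2 h)) (norm_nonneg ((1:ℂ) - (starRingEnd ℂ) z * w)),
      mul_nonneg (norm_nonneg (z-w)) hden.le]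

def moeb (a z : ℂ) : ℂ := (z - a) / (1 - (starRingEnd ℂ) a * z)

lemma norm_moeb (a z : ℂ) : ‖moeb a z‖ = pseudoDist a z := by
  rw [moeb, pseudoDist, norm_div, norm_div, norm_sub_rev]

lemma moeb_mem {a z : ℂ} (ha : ‖a‖ < 1) (hz : ‖z‖ < 1) : ‖moeb a z‖ < 1 := by
  rw [norm_moeb]; exact pd_lt_one ha hz

lemma conj_den (a z : ℂ) :
    (starRingEnd ℂ) ((1:ℂ) - (starRingEnd ℂ) a * z) = 1 - a * (starRingEnd ℂ) z := by
  simp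

lemma pd_moeb {a z w : ℂ} (ha : ‖a‖ < 1) (hz : ‖z‖ < 1) (hw : ‖w‖ < 1) :
    pseudoDist (moeb a z) (moeb a w) = pseudoDist z w := by
  have hdz : (1:ℂ) - (starRingEnd ℂ) a * z ≠ 0 := den_ne ha hz
  have hdw : (1:ℂ) - (starRingEnd ℂ) a * w ≠ 0 := den_ne ha hw
  have hdzw : (1:ℂ) - (starRingEnd ℂ) z * w ≠ 0 := den_ne hz hw
  have hc : (1:ℂ) - a * (starRingEnd ℂ) z ≠ 0 := by
    rw [← conj_den]; exact (map_ne_zero _).mpr hdz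
  have haa : (1:ℂ) - (starRingEnd ℂ) a * a ≠ 0 := den_ne ha ha
  have hD : (1:ℂ) - (starRingEnd ℂ) (moeb a z) * moeb a w ≠ 0 :=
    den_ne (moeb_mem ha hz) (moeb_mem ha hw)
  have hcm : (starRingEnd ℂ) (moeb a z)
      = ((starRingEnd ℂ) z - (starRingEnd ℂ) a) / (1 - a * (starRingEnd ℂ) z) := by
    rw [moeb, map_div₀]; simp
  have h1 : (moeb a z - moeb a w)
        * ((1 - (starRingEnd ℂ) a * z) * (1 - (starRingEnd ℂ) a * w))
      = (1 - (starRingEnd ℂ) a * a) * (z - w) := by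
    rw [moeb, moeb, div_sub_div _ _ hdz hdw, div_mul_cancel₀ _ (mul_ne_zero hdz hdw)]; ring
  have h2 : (1 - (starRingEnd ℂ) (moeb a z) * moeb a w)
        * ((1 - a * (starRingEnd ℂ) z) * (1 - (starRingEnd ℂ) a * w))
      = (1 - (starRingEnd ℂ) a * a) * (1 - (starRingEnd ℂ) z * w) := by
    rw [hcm, moeb, div_mul_div_comm, one_sub_div (mul_ne_zero hc hdw),
      div_mul_cancel₀ _ (mul_ne_zero hc hdw)]; ring
  have n1 := congrArg norm h1
  have n2 := congrArg norm h2
  rw [norm_mul, norm_mul, norm_mul] at n1 n2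
  have hcz : ‖(1:ℂ) - a * (starRingEnd ℂ) z‖ = ‖(1:ℂ) - (starRingEnd ℂ) a * z‖ := by
    rw [← conj_den, RCLike.norm_conj]
  rw [hcz] at n2
  have hpos1 : (0:ℝ) < ‖(1:ℂ) - (starRingEnd ℂ) a * z‖ := norm_pos_iff.mpr hdz
  have hpos2 : (0:ℝ) < ‖(1:ℂ) - (starRingEnd ℂ) a * w‖ := norm_pos_iff.mpr hdw
  have hposzw : (0:ℝ) < ‖(1:ℂ) - (starRingEnd ℂ) z * w‖ := norm_pos_iff.mpr hdzw
  have hposD : (0:ℝ) < ‖(1:ℂ) - (starRingEnd ℂ) (moeb a z) * moeb a w‖ :=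
    norm_pos_iff.mpr hD
  rw [pseudoDist, pseudoDist, norm_div, norm_div]
  rw [div_eq_div_iff hposD.ne' hposzw.ne']
  have key : ‖moeb a z - moeb a w‖ * ‖(1:ℂ) - (starRingEnd ℂ) z * w‖
        * (‖(1:ℂ) - (starRingEnd ℂ) a * z‖ * ‖(1:ℂ) - (starRingEnd ℂ) a * w‖)
      = ‖z - w‖ * ‖(1:ℂ) - (starRingEnd ℂ) (moeb a z) * moeb a w‖
        * (‖(1:ℂ) - (starRingEnd ℂ) a * z‖ * ‖(1:ℂ) - (starRingEnd ℂ) a * w‖) := by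
    linear_combination ‖(1:ℂ) - (starRingEnd ℂ) z * w‖ * n1 - ‖z - w‖ * n2
  have hne : (‖(1:ℂ) - (starRingEnd ℂ) a * z‖ * ‖(1:ℂ) - (starRingEnd ℂ) a * w‖) ≠ 0 := by
    positivity
  exact mul_right_cancel₀ hne key

lemma pd_strong {a z w : ℂ} (ha : ‖a‖ < 1) (hz : ‖z‖ < 1) (hw : ‖w‖ < 1) :
    (pseudoDist a w - pseudoDist a z) / (1 - pseudoDist a z * pseudoDist a w)
      ≤ pseudoDist z w := by
  have h := pd_key (moeb_mem ha hz) (moeb_mem ha hw)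
  rw [pd_moeb ha hz hw, norm_moeb, norm_moeb] at h
  exact h

end AuxPD
section Sel
variable (K : Set ℂ) (H : ℂ → ℝ)

def selX (D : Set ℂ) (s : ℝ) : ℝ := sInf (Complex.re '' {z | z ∈ K ∧ z ∈ D ∧ H z = s})

def selY (s : ℝ) : ℝ :=
  sInf (Complex.im '' {z | z ∈ K ∧ H z = s ∧ z.re = selX K H Set.univ s})

open scoped Classical in
def selG (s : ℝ) : ℂ :=
  if s ∈ H '' K then (selX K H Set.univ s : ℂ) + (selY K H s : ℂ) * Complex.I else 0

variable {K H}
variable (hK : IsCompact K) (hH : ContinuousOn H K)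

lemma sec_eq (D : Set ℂ) (s : ℝ) :
    {z | z ∈ K ∧ z ∈ D ∧ H z = s} = (K ∩ D) ∩ H ⁻¹' {s} := by
  ext z; simp only [mem_setOf_eq, mem_inter_iff, mem_preimage, mem_singleton_iff]; tauto

include hK hH in
lemma sec_compact (D : Set ℂ) (hD : IsClosed D) (s : ℝ) :
    IsCompact {z | z ∈ K ∧ z ∈ D ∧ H z = s} := by
  rw [sec_eq]
  have hcl : IsClosed ((K ∩ D) ∩ H ⁻¹' {s}) :=
    (hH.mono inter_subset_left).preimage_isClosed_of_isClosed
      (hK.isClosed.inter hD) isClosed_singleton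
  exact (hK.inter_right hD).of_isClosed_subset hcl inter_subset_left

include hK hH in
lemma sec_attain (D : Set ℂ) (hD : IsClosed D) (s : ℝ)
    (hne : {z | z ∈ K ∧ z ∈ D ∧ H z = s}.Nonempty) :
    ∃ z, (z ∈ K ∧ z ∈ D ∧ H z = s) ∧ z.re = selX K H D s := by
  obtain ⟨z, hz, hmin⟩ :=
    (sec_compact hK hH D hD s).exists_isMinOn hne Complex.continuous_re.continuousOn
  refine ⟨z, hz, ?_⟩
  have : IsLeast (Complex.re '' {z | z ∈ K ∧ z ∈ D ∧ H z = s}) z.re := by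
    constructor
    · exact mem_image_of_mem _ hz
    · rintro r ⟨w, hw, rfl⟩; exact hmin hw
  exact (this.csInf_eq).symm

include hK hH in
lemma selX_le (D : Set ℂ) (hD : IsClosed D) {s : ℝ} {z : ℂ}
    (hz : z ∈ K ∧ z ∈ D ∧ H z = s) : selX K H D s ≤ z.re := by
  apply csInf_le
  · exact (((sec_compact hK hH D hD s).image Complex.continuous_re)).bddBelow
  · exact mem_image_of_mem _ hz

include hK hH in
lemma meas_selX (D : Set ℂ) (hD : IsClosed D) : Measurable (selX K H D) := by
  apply measurable_of_Iio
  intro q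
  have claim : selX K H D ⁻¹' Iio q
      = (⋃ n : ℕ, H '' {z | (z ∈ K ∧ z ∈ D) ∧ z.re ≤ q - 1/(n+1)})
        ∪ ((H '' (K ∩ D))ᶜ ∩ {_s : ℝ | (0:ℝ) < q}) := by
    ext s
    simp only [mem_preimage, mem_Iio, mem_union, mem_iUnion, mem_inter_iff, mem_compl_iff,
      mem_setOf_eq]
    constructor
    · intro hs
      rcases eq_empty_or_nonempty {z | z ∈ K ∧ z ∈ D ∧ H z = s} with hemp | hne
      · right
        refine ⟨?_, ?_⟩
        · rintro ⟨z, hz, hEq⟩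
          exact (eq_empty_iff_forall_notMem.mp hemp z) ⟨hz.1, hz.2, hEq⟩
        · have h0 : selX K H D s = 0 := by
            rw [selX, hemp, image_empty, Real.sInf_empty]
          rw [h0] at hs; exact hs
      · left
        have hbdd := (((sec_compact hK hH D hD s).image Complex.continuous_re)).bddBelow
        have hne' : (Complex.re '' {z | z ∈ K ∧ z ∈ D ∧ H z = s}).Nonempty :=
          hne.image _
        rw [selX] at hs
        obtain ⟨r, ⟨z, hz, rfl⟩, hr⟩ := (csInf_lt_iff hbdd hne').mp hs
        obtain ⟨n, hn⟩ := exists_nat_one_div_lt (sub_pos.2 hr)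
        exact ⟨n, z, ⟨⟨hz.1, hz.2.1⟩, by linarith⟩, hz.2.2⟩
    · rintro (⟨n, z, ⟨hzKD, hre⟩, rfl⟩ | ⟨hnot, hq⟩)
      · have h1 : selX K H (D) (H z) ≤ z.re :=
          selX_le hK hH D hD ⟨hzKD.1, hzKD.2, rfl⟩
        have : (0:ℝ) < 1/(n+1) := by positivity
        linarith
      · have hemp : {z | z ∈ K ∧ z ∈ D ∧ H z = s} = ∅ := by
          rw [eq_empty_iff_forall_notMem]
          rintro z ⟨h1, h2, h3⟩
          exact hnot ⟨z, ⟨h1, h2⟩, h3⟩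
        have : selX K H D s = 0 := by rw [selX, hemp, image_empty, Real.sInf_empty]
        rw [this]; exact hq
  rw [claim]
  apply MeasurableSet.union
  · apply MeasurableSet.iUnion
    intro n
    have hcomp : IsCompact {z | (z ∈ K ∧ z ∈ D) ∧ z.re ≤ q - 1/(n+1)} := by
      have : {z | (z ∈ K ∧ z ∈ D) ∧ z.re ≤ q - 1/(n+1)}
          = (K ∩ D) ∩ Complex.re ⁻¹' Iic (q - 1/(n+1)) := by
        ext z
        simp only [mem_setOf_eq, mem_inter_iff, mem_preimage, mem_Iic]
      rw [this]
      exact (hK.inter_right hD).inter_right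
        (isClosed_Iic.preimage Complex.continuous_re)
    exact (hcomp.image_of_continuousOn
      (hH.mono (fun z hz => hz.1.1))).measurableSet
  · exact (((hK.inter_right hD).image_of_continuousOn
      (hH.mono inter_subset_left)).measurableSet).compl.inter (MeasurableSet.const _)

lemma sprime_eq (s : ℝ) :
    {z | z ∈ K ∧ H z = s ∧ z.re = selX K H Set.univ s}
      = {z | z ∈ K ∧ z ∈ {w : ℂ | w.re = selX K H Set.univ s} ∧ H z = s} := by
  ext z; simp only [mem_setOf_eq]; tauto

include hK hH in
lemma sprime_attain (s : ℝ)
    (hne : {z | z ∈ K ∧ z ∈ Set.univ ∧ H z = s}.Nonempty) :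
    ∃ z, (z ∈ K ∧ H z = s ∧ z.re = selX K H Set.univ s) ∧ z.im = selY K H s := by
  obtain ⟨z₀, hz₀, hre₀⟩ := sec_attain hK hH Set.univ isClosed_univ s hne
  have hScomp : IsCompact {z | z ∈ K ∧ H z = s ∧ z.re = selX K H Set.univ s} := by
    rw [sprime_eq]
    exact sec_compact hK hH _ (isClosed_eq Complex.continuous_re continuous_const) s
  have hSne : {z | z ∈ K ∧ H z = s ∧ z.re = selX K H Set.univ s}.Nonempty :=
    ⟨z₀, hz₀.1, hz₀.2.2, hre₀⟩
  obtain ⟨z₁, hz₁, hmin⟩ := hScomp.exists_isMinOn hSne Complex.continuous_im.continuousOn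
  refine ⟨z₁, hz₁, ?_⟩
  have : IsLeast (Complex.im '' {z | z ∈ K ∧ H z = s ∧ z.re = selX K H Set.univ s}) z₁.im := by
    constructor
    · exact mem_image_of_mem _ hz₁
    · rintro r ⟨w, hw, rfl⟩; exact hmin hw
  exact (this.csInf_eq).symm

include hK hH in
lemma meas_selY : Measurable (selY K H) := by
  apply measurable_of_Iio
  intro c
  have claim : selY K H ⁻¹' Iio c
      = (⋃ n : ℕ, {s | s ∈ H '' (K ∩ {z : ℂ | z.im ≤ c - 1/(n+1)})}
            ∩ {s | selX K H {z : ℂ | z.im ≤ c - 1/(n+1)} s ≤ selX K H Set.univ s})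
        ∪ ((H '' K)ᶜ ∩ {_s : ℝ | (0:ℝ) < c}) := by
    ext s
    simp only [mem_preimage, mem_Iio, mem_union, mem_iUnion, mem_inter_iff, mem_compl_iff,
      mem_setOf_eq]
    constructor
    · intro hs
      rcases eq_empty_or_nonempty {z | z ∈ K ∧ z ∈ Set.univ ∧ H z = s} with hemp | hne
      · right
        refine ⟨?_, ?_⟩
        · rintro ⟨z, hz, hEq⟩
          exact (eq_empty_iff_forall_notMem.mp hemp z) ⟨hz, mem_univ z, hEq⟩
        · have hempS : {z | z ∈ K ∧ H z = s ∧ z.re = selX K H Set.univ s} = ∅ := by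
            rw [eq_empty_iff_forall_notMem]
            rintro z ⟨h1, h2, h3⟩
            exact (eq_empty_iff_forall_notMem.mp hemp z) ⟨h1, mem_univ z, h2⟩
          have h0 : selY K H s = 0 := by rw [selY, hempS, image_empty, Real.sInf_empty]
          rw [h0] at hs; exact hs
      · left
        obtain ⟨z₁, hz₁, him₁⟩ := sprime_attain hK hH s hne
        obtain ⟨n, hn⟩ := exists_nat_one_div_lt (sub_pos.2 (him₁ ▸ hs))
        refine ⟨n, ⟨z₁, ⟨hz₁.1, by simp only [mem_setOf_eq]; linarith⟩, hz₁.2.1⟩, ?_⟩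
        have h1 : selX K H {z : ℂ | z.im ≤ c - 1/(n+1)} s ≤ z₁.re :=
          selX_le hK hH _ (isClosed_le Complex.continuous_im continuous_const)
            ⟨hz₁.1, by simp only [mem_setOf_eq]; linarith, hz₁.2.1⟩
        rw [← hz₁.2.2]; exact h1
    · rintro (⟨n, ⟨z, hzm, hEq⟩, hle⟩ | ⟨hnot, hc⟩)
      · have hne : {w | w ∈ K ∧ w ∈ {z : ℂ | z.im ≤ c - 1/(n+1)} ∧ H w = s}.Nonempty :=
          ⟨z, hzm.1, hzm.2, hEq⟩
        obtain ⟨z₁, hz₁, hre₁⟩ := sec_attain hK hH _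
          (isClosed_le Complex.continuous_im continuous_const) s hne
        have h2 : selX K H Set.univ s ≤ z₁.re :=
          selX_le hK hH Set.univ isClosed_univ ⟨hz₁.1, mem_univ _, hz₁.2.2⟩
        have h3 : z₁.re = selX K H Set.univ s := le_antisymm (by rw [hre₁]; exact hle) h2
        have hz₁S : z₁ ∈ {z | z ∈ K ∧ H z = s ∧ z.re = selX K H Set.univ s} :=
          ⟨hz₁.1, hz₁.2.2, h3⟩
        have hbdd : BddBelow (Complex.im '' {z | z ∈ K ∧ H z = s ∧ z.re = selX K H Set.univ s}) := by
          have hScomp : IsCompact {z | z ∈ K ∧ H z = s ∧ z.re = selX K H Set.univ s} := by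
            rw [sprime_eq]
            exact sec_compact hK hH _ (isClosed_eq Complex.continuous_re continuous_const) s
          exact (hScomp.image Complex.continuous_im).bddBelow
        have h4 : selY K H s ≤ z₁.im := csInf_le hbdd (mem_image_of_mem _ hz₁S)
        have h5 : z₁.im ≤ c - 1/(n+1) := hz₁.2.1
        have : (0:ℝ) < 1/(n+1) := by positivity
        linarith
      · have hempS : {z | z ∈ K ∧ H z = s ∧ z.re = selX K H Set.univ s} = ∅ := by
          rw [eq_empty_iff_forall_notMem]
          rintro z ⟨h1, h2, h3⟩
          exact hnot ⟨z, h1, h2⟩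
        have h0 : selY K H s = 0 := by rw [selY, hempS, image_empty, Real.sInf_empty]
        rw [h0]; exact hc
  rw [claim]
  apply MeasurableSet.union
  · apply MeasurableSet.iUnion
    intro n
    apply MeasurableSet.inter
    · exact ((hK.inter_right (isClosed_le Complex.continuous_im
        continuous_const)).image_of_continuousOn (hH.mono inter_subset_left)).measurableSet
    · exact measurableSet_le
        (meas_selX hK hH _ (isClosed_le Complex.continuous_im continuous_const))
        (meas_selX hK hH Set.univ isClosed_univ)
  · exact ((hK.image_of_continuousOn hH).measurableSet).compl.inter (MeasurableSet.const _)

include hK hH in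
lemma meas_selG : Measurable (selG K H) := by
  classical
  apply Measurable.ite (hK.image_of_continuousOn hH).measurableSet
  · exact (Complex.measurable_ofReal.comp (meas_selX hK hH Set.univ isClosed_univ)).add
      ((Complex.measurable_ofReal.comp (meas_selY hK hH)).mul_const Complex.I)
  · exact measurable_const

include hK hH in
lemma selG_spec {s : ℝ} (hs : s ∈ H '' K) :
    selG K H s ∈ K ∧ H (selG K H s) = s := by
  classical
  have hne : {z | z ∈ K ∧ z ∈ Set.univ ∧ H z = s}.Nonempty := by
    obtain ⟨z, hz, hEq⟩ := hs; exact ⟨z, hz, mem_univ z, hEq⟩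
  obtain ⟨z₁, hz₁, him₁⟩ := sprime_attain hK hH s hne
  have hg : selG K H s = z₁ := by
    rw [selG, if_pos hs]
    apply Complex.ext
    · simp [hz₁.2.2]
    · simp [him₁]
  rw [hg]; exact ⟨hz₁.1, hz₁.2.1⟩

end Sel

section AuxKer
def psiK (v : ℝ) : ℝ :=
  if |v| ≤ 1 then Real.log 6 + 2 / Real.sqrt |v| else 4 * Real.exp (-|v|)

lemma psiK_nonneg (v : ℝ) : 0 ≤ psiK v := by
  rw [psiK]
  split_ifs
  · have h6 : (0:ℝ) ≤ Real.log 6 := Real.log_nonneg (by norm_num)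
    have : (0:ℝ) ≤ 2 / Real.sqrt |v| := by positivity
    linarith
  · positivity

lemma psiK_even (v : ℝ) : psiK (-v) = psiK v := by rw [psiK, psiK, abs_neg]

lemma psiK_meas : Measurable psiK := by
  apply Measurable.ite (measurableSet_le (_root_.measurable_abs) measurable_const)
  · exact measurable_const.add
      (measurable_const.div (Real.continuous_sqrt.measurable.comp _root_.measurable_abs))
  · exact ((_root_.measurable_abs.neg).exp).const_mul 4

lemma log6_le : Real.log 6 ≤ 2 := by
  rw [show (2:ℝ) = Real.log (Real.exp 2) from (Real.log_exp 2).symm]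
  apply Real.log_le_log (by norm_num)
  have h := Real.exp_one_gt_d9
  have h2 : Real.exp 2 = Real.exp 1 * Real.exp 1 := by
    rw [← Real.exp_add]; norm_num
  nlinarith [Real.exp_pos 1]

lemma exp_one_ge_two : (2:ℝ) ≤ Real.exp 1 := by
  have h := Real.exp_one_gt_d9; nlinarith

lemma lintegral_psiK_Ioi : ∫⁻ v in Ioi (0:ℝ), ENNReal.ofReal (psiK v) ≤ ENNReal.ofReal 8 := by
  have hsplit : (Ioi (0:ℝ)) = Ioc (0:ℝ) 1 ∪ Ioi (1:ℝ) := (Ioc_union_Ioi_eq_Ioi zero_le_one).symm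
  rw [hsplit, lintegral_union measurableSet_Ioi (Ioc_disjoint_Ioi le_rfl)]
  have piece1 : ∫⁻ v in Ioc (0:ℝ) 1, ENNReal.ofReal (psiK v) ≤ ENNReal.ofReal 6 := by
    have hcong : ∫⁻ v in Ioc (0:ℝ) 1, ENNReal.ofReal (psiK v)
        = ∫⁻ v in Ioc (0:ℝ) 1, ENNReal.ofReal (Real.log 6 + 2 * v ^ (-(1/2) : ℝ)) := by
      apply setLIntegral_congr_fun measurableSet_Ioc
      intro v hv
      dsimp only
      rw [psiK, abs_of_pos hv.1, if_pos hv.2, Real.sqrt_eq_rpow]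
      congr 1
      rw [Real.rpow_neg hv.1.le, div_eq_mul_inv]
    rw [hcong]
    have hInt : IntegrableOn (fun v : ℝ => Real.log 6 + 2 * v ^ (-(1/2) : ℝ)) (Ioc 0 1) := by
      apply Integrable.add
      · exact integrableOn_const measure_Ioc_lt_top.ne
      · have h := (intervalIntegral.intervalIntegrable_rpow' (a := 0) (b := 1)
          (show (-1:ℝ) < -(1/2) by norm_num))
        exact ((intervalIntegrable_iff_integrableOn_Ioc_of_le zero_le_one).mp h).const_mul 2
    rw [← ofReal_integral_eq_lintegral_ofReal hInt ?nn]
    case nn =>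
      filter_upwards [ae_restrict_mem measurableSet_Ioc] with v hv
      simp only [Pi.zero_apply]
      have h1 : (0:ℝ) ≤ v ^ (-(1/2) : ℝ) := Real.rpow_nonneg hv.1.le _
      have h6 : (0:ℝ) ≤ Real.log 6 := Real.log_nonneg (by norm_num)
      linarith
    apply ENNReal.ofReal_le_ofReal
    have hval : ∫ v in Ioc (0:ℝ) 1, (Real.log 6 + 2 * v ^ (-(1/2) : ℝ))
        = ∫ v in (0:ℝ)..1, (Real.log 6 + 2 * v ^ (-(1/2) : ℝ)) := by
      rw [intervalIntegral.integral_of_le zero_le_one]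
    rw [hval]
    have hrpowInt : IntervalIntegrable (fun v : ℝ => v ^ (-(1/2) : ℝ)) volume 0 1 :=
      intervalIntegral.intervalIntegrable_rpow' (by norm_num)
    rw [intervalIntegral.integral_add (intervalIntegrable_const) (hrpowInt.const_mul 2),
      intervalIntegral.integral_const, intervalIntegral.integral_const_mul,
      integral_rpow (Or.inl (by norm_num))]
    rw [Real.one_rpow, Real.zero_rpow (by norm_num)]
    have h6 := log6_le
    norm_num
    linarith
  have piece2 : ∫⁻ v in Ioi (1:ℝ), ENNReal.ofReal (psiK v) ≤ ENNReal.ofReal 2 := by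
    have hcong : ∫⁻ v in Ioi (1:ℝ), ENNReal.ofReal (psiK v)
        = ∫⁻ v in Ioi (1:ℝ), ENNReal.ofReal (4 * Real.exp (-v)) := by
      apply setLIntegral_congr_fun measurableSet_Ioi
      intro v hv
      dsimp only
      have hv1 : (1:ℝ) < v := hv
      have h1 : (1:ℝ) < |v| := by rw [abs_of_pos (by linarith : (0:ℝ) < v)]; exact hv1
      rw [psiK, if_neg (not_le.mpr h1), abs_of_pos (by linarith : (0:ℝ) < v)]
    rw [hcong]
    have hInt : IntegrableOn (fun v : ℝ => Real.exp (-v)) (Ioi 1) := by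
      have := exp_neg_integrableOn_Ioi (1:ℝ) (b := 1) one_pos
      simpa using this
    rw [← ofReal_integral_eq_lintegral_ofReal (hInt.const_mul 4) ?nn2]
    case nn2 =>
      filter_upwards with v
      simp only [Pi.zero_apply]
      positivity
    apply ENNReal.ofReal_le_ofReal
    rw [MeasureTheory.integral_const_mul, integral_exp_neg_Ioi]
    have h2 := exp_one_ge_two
    have hexp : Real.exp (-1) ≤ 1/2 := by
      rw [Real.exp_neg]
      rw [inv_le_comm₀ (Real.exp_pos 1) (by norm_num)]
      simpa using h2
    linarith
  calc _ ≤ ENNReal.ofReal 6 + ENNReal.ofReal 2 := add_le_add piece1 piece2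
    _ = ENNReal.ofReal 8 := by rw [← ENNReal.ofReal_add] <;> norm_num

lemma lintegral_psiK : ∫⁻ v : ℝ, ENNReal.ofReal (psiK v) ≤ ENNReal.ofReal 16 := by
  have hIci : ∫⁻ v in Ici (0:ℝ), ENNReal.ofReal (psiK v) ≤ ENNReal.ofReal 8 := by
    rw [setLIntegral_congr (Ioi_ae_eq_Ici (a := (0:ℝ))).symm]
    exact lintegral_psiK_Ioi
  have hIio : ∫⁻ v in Iio (0:ℝ), ENNReal.ofReal (psiK v) ≤ ENNReal.ofReal 8 := by
    have hmp : MeasurePreserving (Neg.neg : ℝ → ℝ) volume volume :=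
      Measure.measurePreserving_neg volume
    have hemb : MeasurableEmbedding (Neg.neg : ℝ → ℝ) :=
      (Homeomorph.neg ℝ).measurableEmbedding
    have h1 := hmp.setLIntegral_comp_preimage_emb hemb
      (fun v => ENNReal.ofReal (psiK v)) (Iio 0)
    have hpre : (Neg.neg : ℝ → ℝ) ⁻¹' (Iio 0) = Ioi 0 := by
      ext v; simp
    rw [hpre] at h1
    rw [← h1]
    have he : ∀ v : ℝ, ENNReal.ofReal (psiK (-v)) = ENNReal.ofReal (psiK v) := by
      intro v; rw [psiK_even]
    simp only [he]
    exact lintegral_psiK_Ioi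
  calc ∫⁻ v : ℝ, ENNReal.ofReal (psiK v)
      = (∫⁻ v in Ici (0:ℝ), ENNReal.ofReal (psiK v))
        + ∫⁻ v in (Ici (0:ℝ))ᶜ, ENNReal.ofReal (psiK v) :=
        (lintegral_add_compl _ measurableSet_Ici).symm
    _ ≤ ENNReal.ofReal 8 + ENNReal.ofReal 8 := by
        apply add_le_add hIci
        rw [show (Ici (0:ℝ))ᶜ = Iio 0 from compl_Ici]
        exact hIio
    _ = ENNReal.ofReal 16 := by rw [← ENNReal.ofReal_add] <;> norm_num

lemma lintegral_psiK_shift (M u : ℝ) :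
    ∫⁻ v in Icc (0:ℝ) M, ENNReal.ofReal (psiK (u - v)) ≤ ENNReal.ofReal 16 := by
  have h1 : ∫⁻ v in Icc (0:ℝ) M, ENNReal.ofReal (psiK (u - v))
      ≤ ∫⁻ v : ℝ, ENNReal.ofReal (psiK (u - v)) := setLIntegral_le_lintegral _ _
  have hmp : MeasurePreserving (fun v : ℝ => u - v) volume volume := by
    have hn : MeasurePreserving (fun v : ℝ => -v) volume volume :=
      Measure.measurePreserving_neg volume
    have ha : MeasurePreserving (fun v : ℝ => u + v) volume volume :=
      measurePreserving_add_left volume u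
    have := ha.comp hn
    simpa [Function.comp_def, sub_eq_add_neg] using this
  have h2 : ∫⁻ v : ℝ, ENNReal.ofReal (psiK (u - v))
      = ∫⁻ v : ℝ, ENNReal.ofReal (psiK v) :=
    hmp.lintegral_comp (ENNReal.measurable_ofReal.comp psiK_meas)
  calc _ ≤ _ := h1
    _ = _ := h2
    _ ≤ _ := lintegral_psiK

lemma exp_neg_one_le_half : Real.exp (-1) ≤ 1/2 := by
  rw [Real.exp_neg, inv_le_comm₀ (Real.exp_pos 1) (by norm_num)]
  simpa using exp_one_ge_two

lemma exp_neg_one_ge_third : (1:ℝ)/3 ≤ Real.exp (-1) := by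
  rw [Real.exp_neg]
  rw [le_inv_comm₀ (by norm_num) (Real.exp_pos 1)]
  have h := Real.exp_one_lt_d9
  linarith

lemma log_bound {v : ℝ} (hv : 0 < v) :
    Real.log ((1 + Real.exp (-v)) / (1 - Real.exp (-v))) ≤ psiK v := by
  set E := Real.exp (-v) with hE
  have hE0 : 0 < E := Real.exp_pos _
  have hE1 : E < 1 := by
    rw [hE]; exact Real.exp_lt_one_iff.mpr (by linarith)
  have hden : 0 < 1 - E := by linarith
  have hQ0 : 0 < (1 + E) / (1 - E) := by positivity
  rcases le_or_gt v 1 with hv1 | hv1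
  · -- small v
    have habs : |v| = v := abs_of_pos hv
    rw [psiK, habs, if_pos hv1]
    have hEv : v * E ≤ 1 - E := by
      have h := Real.add_one_le_exp v
      have h2 : (v + 1) * E ≤ Real.exp v * E := by nlinarith
      rw [← Real.exp_add] at h2
      simp at h2
      nlinarith
    have hE3 : (1:ℝ)/3 ≤ E := by
      have : Real.exp (-1) ≤ E := by
        rw [hE]; exact Real.exp_le_exp.mpr (by linarith)
      linarith [exp_neg_one_ge_third]
    have hden3 : v/3 ≤ 1 - E := by nlinarith
    have hQle : (1 + E) / (1 - E) ≤ 6 / v := by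
      rw [div_le_div_iff₀ hden hv]
      nlinarith
    have hlog1 : Real.log ((1 + E) / (1 - E)) ≤ Real.log (6 / v) :=
      Real.log_le_log hQ0 hQle
    have hlog2 : Real.log (6 / v) = Real.log 6 - Real.log v :=
      Real.log_div (by norm_num) hv.ne'
    have hsq : 0 < Real.sqrt v := Real.sqrt_pos.mpr hv
    have hlog3 : Real.log (Real.sqrt v)⁻¹ ≤ (Real.sqrt v)⁻¹ - 1 :=
      Real.log_le_sub_one_of_pos (by positivity)
    rw [Real.log_inv, Real.log_sqrt hv.le] at hlog3
    have : -Real.log v ≤ 2 / Real.sqrt v := by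
      rw [div_eq_mul_inv]
      linarith
    linarith
  · -- large v
    have habs : |v| = v := abs_of_pos hv
    rw [psiK, habs, if_neg (not_le.mpr hv1)]
    have hEhalf : E ≤ 1/2 := by
      have : E ≤ Real.exp (-1) := by
        rw [hE]; exact Real.exp_le_exp.mpr (by linarith)
      linarith [exp_neg_one_le_half]
    have hQle : (1 + E) / (1 - E) ≤ 1 + 4 * E := by
      rw [div_le_iff₀ hden]
      nlinarith
    have hlog := Real.log_le_sub_one_of_pos hQ0
    linarith

lemma pd_self (z : ℂ) : pseudoDist z z = 0 := by simp [pseudoDist]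

lemma pd_nonneg (z w : ℂ) : 0 ≤ pseudoDist z w := norm_nonneg _

lemma norm_conj_swap (z w : ℂ) :
    ‖(1:ℂ) - (starRingEnd ℂ) w * z‖ = ‖(1:ℂ) - (starRingEnd ℂ) z * w‖ := by
  have : (1:ℂ) - (starRingEnd ℂ) w * z = (starRingEnd ℂ) ((1:ℂ) - (starRingEnd ℂ) z * w) := by
    simp [mul_comm]
  rw [this, RCLike.norm_conj]

lemma greenFnE_symm (z w : ℂ) : greenFnE z w = greenFnE w z := by
  rw [greenFnE, greenFnE]
  rcases eq_or_ne z w with rfl | hne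
  · simp
  · rw [if_neg hne, if_neg (Ne.symm hne)]
    congr 2
    rw [norm_div, norm_div, norm_conj_swap z w, norm_sub_rev z w]

lemma greenFnE_le_core {a z w : ℂ} (ha : ‖a‖ < 1) (hz : ‖z‖ < 1) (hw : ‖w‖ < 1)
    {u u' : ℝ} (hu : 0 ≤ u) (hlt : u < u')
    (hsz : pseudoDist a z = 1 - Real.exp (-u)) (hsw : pseudoDist a w = 1 - Real.exp (-u')) :
    greenFnE z w ≤ ENNReal.ofReal (psiK (u - u')) := by
  set E := Real.exp (-u) with hEdef
  set E' := Real.exp (-u') with hE'def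
  have hE0 : 0 < E := Real.exp_pos _
  have hE'0 : 0 < E' := Real.exp_pos _
  have hE'E : E' < E := Real.exp_lt_exp.mpr (by linarith)
  have hE1 : E ≤ 1 := by
    rw [hEdef]; exact Real.exp_le_one_iff.mpr (by linarith)
  -- lower bound for pseudoDist z w
  have hsz' : pseudoDist a z = 1 - E := hsz
  have hsw' : pseudoDist a w = 1 - E' := hsw
  have h1 : (pseudoDist a w - pseudoDist a z) / (1 - pseudoDist a z * pseudoDist a w)
      = (E - E') / (1 - (1-E)*(1-E')) := by rw [hsz', hsw']; ring_nf
  have hdenpos : 0 < E + E' - E * E' := by nlinarith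
  have h2 : (1 : ℝ) - (1-E)*(1-E') = E + E' - E*E' := by ring
  have hP : (E - E') / (E + E') ≤ pseudoDist z w := by
    have hstep : (E - E') / (E + E') ≤ (E - E') / (E + E' - E*E') := by
      apply div_le_div_of_nonneg_left (by linarith) hdenpos
      nlinarith
    calc (E - E') / (E + E') ≤ (E - E') / (E + E' - E*E') := hstep
      _ = (pseudoDist a w - pseudoDist a z) / (1 - pseudoDist a z * pseudoDist a w) := by
          rw [h1, h2]
      _ ≤ pseudoDist z w := pd_strong ha hz hw
  have hPpos : 0 < (E - E') / (E + E') := div_pos (by linarith) (by positivity)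
  have hρpos : 0 < pseudoDist z w := lt_of_lt_of_le hPpos hP
  have hne : z ≠ w := by
    intro h; rw [h, pd_self] at hρpos; exact lt_irrefl _ hρpos
  rw [greenFnE, if_neg hne]
  apply ENNReal.ofReal_le_ofReal
  have hnorm : ‖(1 - (starRingEnd ℂ) w * z) / (z - w)‖ = (pseudoDist z w)⁻¹ := by
    rw [norm_div, pseudoDist, norm_div, norm_conj_swap]
    rw [inv_div]
  rw [hnorm]
  have hv : 0 < u' - u := by linarith
  have hQeq : ((E - E') / (E + E'))⁻¹ = (1 + Real.exp (-(u'-u))) / (1 - Real.exp (-(u'-u))) := by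
    have hEE : E' = E * Real.exp (-(u'-u)) := by
      rw [hEdef, hE'def, ← Real.exp_add]; ring_nf
    have hexp1 : Real.exp (-(u'-u)) < 1 := Real.exp_lt_one_iff.mpr (by linarith)
    rw [inv_div, hEE]
    rw [div_eq_div_iff (by nlinarith) (by nlinarith)]
    ring
  have hmono : Real.log (pseudoDist z w)⁻¹
      ≤ Real.log ((1 + Real.exp (-(u'-u))) / (1 - Real.exp (-(u'-u)))) := by
    rw [← hQeq]
    apply Real.log_le_log (by positivity)
    exact inv_anti₀ hPpos hP
  have hb := log_bound hv
  have hpsi : psiK (u - u') = psiK (u' - u) := by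
    rw [show u - u' = -(u' - u) by ring, psiK_even]
  rw [hpsi]
  linarith

end AuxKer

/-- There is an absolute constant `c > 0` such that every compact connected
subset `K` of the unit disk of pseudo-hyperbolic diameter `> 1 - ε` (`0 < ε < 1`) satisfies
`capa(K) ≥ c log(1/ε)`. -/
theorem greenCapa_ge_of_pseudoDiam :
    ∃ c : ℝ, 0 < c ∧
      ∀ K : Set ℂ, IsCompact K → K ⊆ unitDisk → IsConnected K →
        ∀ ε : ℝ, 0 < ε → ε < 1 → 1 - ε < pseudoDiam K →
          ENNReal.ofReal (c * Real.log (1 / ε)) ≤ greenCapa K := by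
  refine ⟨1/16, by norm_num, ?_⟩
  intro K hKc hKsub hKconn ε hε0 hε1 hdiam
  rw [pseudoDiam] at hdiam
  -- extract two far-apart points
  have hSne : {d : ℝ | ∃ z ∈ K, ∃ w ∈ K, d = pseudoDist z w}.Nonempty := by
    by_contra h
    rw [Set.not_nonempty_iff_eq_empty] at h
    rw [h, Real.sSup_empty] at hdiam; linarith
  obtain ⟨d, ⟨a, haK, b, hbK, rfl⟩, hdgt⟩ := exists_lt_of_lt_csSup hSne hdiam
  have ha : ‖a‖ < 1 := hKsub haK
  have hb : ‖b‖ < 1 := hKsub hbK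
  -- the distance function from a
  set H : ℂ → ℝ := fun z => pseudoDist a z with hHdef
  have hHcont : ContinuousOn H K := by
    apply ContinuousOn.norm
    apply ContinuousOn.div
    · exact (continuous_const.sub continuous_id).continuousOn
    · exact (continuous_const.sub (continuous_const.mul continuous_id)).continuousOn
    · intro z hz; exact den_ne ha (hKsub hz)
  have hIVT : Icc (0:ℝ) (pseudoDist a b) ⊆ H '' K := by
    have h0 : H a = 0 := pd_self a
    have h2 := hKconn.isPreconnected.intermediate_value haK hbK hHcont
    rw [h0] at h2
    exact h2
  -- the parameter interval
  set M := Real.log (1/ε) with hMdef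
  have hM0 : 0 < M := by
    apply Real.log_pos
    rw [lt_div_iff₀ hε0]; linarith
  have hexpM : Real.exp (-M) = ε := by
    rw [hMdef, one_div, Real.log_inv, neg_neg, Real.exp_log hε0]
  -- the parametrized selection
  set g : ℝ → ℂ := fun u => selG K H (1 - Real.exp (-u)) with hgdef
  have hg : Measurable g :=
    (meas_selG hKc hHcont).comp
      ((continuous_const.sub (Real.continuous_exp.comp continuous_neg)).measurable)
  have hgprop : ∀ u ∈ Icc (0:ℝ) M, g u ∈ K ∧ H (g u) = 1 - Real.exp (-u) := by
    intro u hu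
    apply selG_spec hKc hHcont
    apply hIVT
    constructor
    · have h1 : Real.exp (-u) ≤ 1 := Real.exp_le_one_iff.mpr (by linarith [hu.1])
      linarith
    · have h1 : Real.exp (-M) ≤ Real.exp (-u) := Real.exp_le_exp.mpr (by linarith [hu.2])
      rw [hexpM] at h1
      linarith
  -- the measure
  set A := ENNReal.ofReal M with hA
  have hA0 : A ≠ 0 := by
    simp only [hA, ne_eq, ENNReal.ofReal_eq_zero, not_le]; exact hM0
  have hAtop : A ≠ ⊤ := ENNReal.ofReal_ne_top
  set ν : Measure ℝ := A⁻¹ • (volume.restrict (Icc 0 M)) with hν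
  have hνuniv : ν Set.univ = 1 := by
    rw [hν, Measure.smul_apply, Measure.restrict_apply MeasurableSet.univ, Set.univ_inter,
      Real.volume_Icc, sub_zero, smul_eq_mul, ← hA]
    exact ENNReal.inv_mul_cancel hA0 hAtop
  haveI instP : IsProbabilityMeasure ν := ⟨hνuniv⟩
  set μ := Measure.map g ν with hμ
  haveI instPμ : IsProbabilityMeasure μ := Measure.isProbabilityMeasure_map hg.aemeasurable
  have hμKc : μ Kᶜ = 0 := by
    rw [hμ, Measure.map_apply hg hKc.isClosed.measurableSet.compl, hν, Measure.smul_apply,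
      Measure.restrict_apply (hg hKc.isClosed.measurableSet.compl)]
    have hemp : g ⁻¹' Kᶜ ∩ Icc 0 M = ∅ := by
      rw [Set.eq_empty_iff_forall_notMem]; rintro u ⟨hu1, hu2⟩
      exact hu1 ((hgprop u hu2).1)
    rw [hemp, measure_empty, smul_eq_mul, mul_zero]
  -- measurability of the kernel
  have hGmeas : Measurable (Function.uncurry greenFnE) := by
    have heq : Function.uncurry greenFnE = fun p : ℂ × ℂ =>
        if p.1 = p.2 then (⊤ : ℝ≥0∞)
        else ENNReal.ofReal
          (Real.log (‖1 - (starRingEnd ℂ) p.2 * p.1‖ / ‖p.1 - p.2‖)) := by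
      funext p
      show greenFnE p.1 p.2 = _
      rw [greenFnE, norm_div]
    rw [heq]
    apply Measurable.ite
    · exact (isClosed_eq continuous_fst continuous_snd).measurableSet
    · exact measurable_const
    · apply ENNReal.measurable_ofReal.comp
      apply Real.measurable_log.comp
      apply Measurable.div
      · exact ((continuous_const.sub ((Complex.continuous_conj.comp
          continuous_snd).mul continuous_fst)).norm).measurable
      · exact ((continuous_fst.sub continuous_snd).norm).measurable
  have hsec : ∀ z : ℂ, Measurable (greenFnE z) :=
    fun z => hGmeas.comp measurable_prodMk_left
  have hF : Measurable (fun z => ∫⁻ w, greenFnE z w ∂μ) := hGmeas.lintegral_prod_right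
  -- rewrite the energy
  have hEnergy : greenEnergy μ = ∫⁻ u, ∫⁻ u', greenFnE (g u) (g u') ∂ν ∂ν := by
    rw [greenEnergy, hμ, lintegral_map hF hg]
    exact lintegral_congr fun u => lintegral_map (hsec _) hg
  -- inner bound
  have hInner : ∀ u ∈ Icc (0:ℝ) M,
      ∫⁻ u', greenFnE (g u) (g u') ∂ν ≤ A⁻¹ * ENNReal.ofReal 16 := by
    intro u hu
    rw [hν, lintegral_smul_measure]
    refine mul_le_mul_of_nonneg_left ?_ zero_le
    have hmono : ∫⁻ u' in Icc (0:ℝ) M, greenFnE (g u) (g u') ∂volume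
        ≤ ∫⁻ u' in Icc (0:ℝ) M, ENNReal.ofReal (psiK (u - u')) ∂volume := by
      apply setLIntegral_mono_ae
      · exact ((ENNReal.measurable_ofReal.comp
          (psiK_meas.comp (measurable_const.sub measurable_id)))).aemeasurable
      · have hae : ∀ᵐ u' : ℝ, u' ≠ u := by
          rw [ae_iff]
          have hset : {u' : ℝ | ¬ u' ≠ u} = {u} := by ext x; simp
          rw [hset]; exact measure_singleton u
        filter_upwards [hae] with u' hneq hu'
        have hzU : ‖g u‖ < 1 := hKsub ((hgprop u hu).1)
        have hzU' : ‖g u'‖ < 1 := hKsub ((hgprop u' hu').1)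
        have hHu := (hgprop u hu).2
        have hHu' := (hgprop u' hu').2
        rcases lt_or_gt_of_ne (Ne.symm hneq) with hlt | hgt
        · exact greenFnE_le_core ha hzU hzU' hu.1 hlt hHu hHu'
        · have h := greenFnE_le_core ha hzU' hzU hu'.1 hgt hHu' hHu
          have hps : psiK (u - u') = psiK (u' - u) := by
            rw [show u - u' = -(u' - u) by ring, psiK_even]
          rw [greenFnE_symm, hps]
          exact h
    exact hmono.trans (lintegral_psiK_shift M u)
  -- outer bound
  have hOuter : greenEnergy μ ≤ A⁻¹ * ENNReal.ofReal 16 := by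
    rw [hEnergy, hν, lintegral_smul_measure]
    have h1 : ∫⁻ u in Icc (0:ℝ) M, (∫⁻ u', greenFnE (g u) (g u') ∂ν) ∂volume
        ≤ (A⁻¹ * ENNReal.ofReal 16) * A := by
      calc ∫⁻ u in Icc (0:ℝ) M, (∫⁻ u', greenFnE (g u) (g u') ∂ν) ∂volume
          ≤ ∫⁻ _u in Icc (0:ℝ) M, (A⁻¹ * ENNReal.ofReal 16) ∂volume :=
            setLIntegral_mono measurable_const hInner
        _ = (A⁻¹ * ENNReal.ofReal 16) * volume (Icc (0:ℝ) M) := setLIntegral_const _ _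
        _ = (A⁻¹ * ENNReal.ofReal 16) * A := by rw [Real.volume_Icc, sub_zero, ← hA]
    calc A⁻¹ * ∫⁻ u in Icc (0:ℝ) M, (∫⁻ u', greenFnE (g u) (g u') ∂ν) ∂volume
        ≤ A⁻¹ * ((A⁻¹ * ENNReal.ofReal 16) * A) := mul_le_mul_of_nonneg_left h1 zero_le
      _ = A⁻¹ * ENNReal.ofReal 16 := by
          rw [mul_comm (A⁻¹ * ENNReal.ofReal 16) A, ← mul_assoc,
            ENNReal.inv_mul_cancel hA0 hAtop, one_mul]
  -- conclude
  have hV : greenV K ≤ A⁻¹ * ENNReal.ofReal 16 := by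
    refine le_trans ?_ hOuter
    rw [greenV]
    exact iInf_le_of_le μ (iInf_le_of_le instPμ
      (iInf_le_of_le ⟨K, Set.Subset.rfl, hKc, hμKc⟩ le_rfl))
  rw [greenCapa]
  have hcap : (A⁻¹ * ENNReal.ofReal 16)⁻¹ ≤ (greenV K)⁻¹ := ENNReal.inv_le_inv' hV
  refine le_trans ?_ hcap
  rw [ENNReal.mul_inv (Or.inl (ENNReal.inv_ne_zero.mpr hAtop))
    (Or.inl (ENNReal.inv_ne_top.mpr hA0)), inv_inv]
  rw [ENNReal.ofReal_mul (by norm_num : (0:ℝ) ≤ 1/16)]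
  have h16 : (ENNReal.ofReal 16)⁻¹ = ENNReal.ofReal (1/16) := by
    rw [one_div, ← ENNReal.ofReal_inv_of_pos (by norm_num : (0:ℝ) < 16)]
  rw [h16, mul_comm]


end
end

section
/- Let H_ω be a weighted analytic Hilbert space and let φ be an analytic self-map of the unit disk D with ρ := ‖φ‖_∞ < 1. Then φ is a symbol for H_ω (i.e. f∘φ ∈ H_ω for all f ∈ H_ω) if and only if φ ∈ H_ω, and in that case, for every integer k ≥ 1 one has ‖φ^k‖² ≤ ρ^{2k} (1 + k² ρ^{−2}) ‖φ‖², where ‖·‖ is the norm of H_ω. -/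
open MeasureTheory Set Filter
open scoped ENNReal NNReal

noncomputable section

open scoped Real

lemma isOpen_unitDisk : IsOpen unitDisk :=
  isOpen_lt continuous_norm continuous_const

lemma sqrt_norm_key (z : ℂ) : Real.sqrt (z.re * z.re + z.im * z.im) = ‖z‖ := by
  rw [Complex.norm_def, Complex.normSq_apply]

lemma integrableOn_omega_disk (ω : ℝ → ℝ) (hω_int : IntegrableOn ω (Set.Ico 0 1)) :
    IntegrableOn (fun z : ℂ => ω ‖z‖) unitDisk := by
  set S : Set (ℝ × ℝ) := {p | Real.sqrt (p.1 * p.1 + p.2 * p.2) < 1} with hS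
  set h : ℝ × ℝ → ℝ := S.indicator (fun p => ω (Real.sqrt (p.1 * p.1 + p.2 * p.2))) with hh
  -- step 1 : integrability of r ↦ r * ω r on (0,1), as an indicator
  have hωIoo : IntegrableOn ω (Ioo 0 1) := hω_int.mono_set Ioo_subset_Ico_self
  set q : ℝ → ℝ := (Ioo (0:ℝ) 1).indicator (fun r => r * ω r) with hq
  have hq_int : Integrable q := by
    rw [hq, integrable_indicator_iff measurableSet_Ioo]
    apply Integrable.mono' (f := fun r => r * ω r) hωIoo.norm
      (aestronglyMeasurable_id.mul hωIoo.1)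
    filter_upwards [ae_restrict_mem measurableSet_Ioo] with r hr
    rw [norm_mul]
    calc ‖r‖ * ‖ω r‖ ≤ 1 * ‖ω r‖ := by
          apply mul_le_mul_of_nonneg_right _ (norm_nonneg _)
          rw [Real.norm_eq_abs, abs_le]; constructor <;> [linarith [hr.1]; linarith [hr.2]]
      _ = ‖ω r‖ := one_mul _
  -- step 2 : the product function is integrable on the polar target
  have hq_prod : Integrable (fun p : ℝ × ℝ => q p.1 * (fun _ : ℝ => (1:ℝ)) p.2)
      ((volume.restrict (Ioi (0:ℝ))).prod (volume.restrict (Ioo (-π) π))) :=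
    Integrable.mul_prod hq_int.restrict (integrableOn_const measure_Ioo_lt_top.ne)
  rw [Measure.prod_restrict, ← Measure.volume_eq_prod] at hq_prod
  -- step 3 : the Jacobian matrix
  set B : ℝ × ℝ → ℝ × ℝ →L[ℝ] ℝ × ℝ := fun p =>
    LinearMap.toContinuousLinearMap (Matrix.toLin (Module.Basis.finTwoProd ℝ) (Module.Basis.finTwoProd ℝ)
      !![Real.cos p.2, -p.1 * Real.sin p.2; Real.sin p.2, p.1 * Real.cos p.2]) with hB
  have B_det : ∀ p, (B p).det = p.1 := by
    intro p
    conv_rhs => rw [← one_mul p.1, ← Real.cos_sq_add_sin_sq p.2]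
    simp only [hB, neg_mul, LinearMap.det_toContinuousLinearMap, LinearMap.det_toLin,
      Matrix.det_fin_two_of, sub_neg_eq_add]
    ring
  -- step 4 : integrability of the transported function on the target
  have htarget : polarCoord.target = Ioi (0:ℝ) ×ˢ Ioo (-π) π := rfl
  have hF : IntegrableOn (fun p => |(B p).det| • h (polarCoord.symm p)) polarCoord.target := by
    apply hq_prod.congr
    filter_upwards [ae_restrict_mem ((isOpen_Ioi.prod isOpen_Ioo).measurableSet)] with p hp
    obtain ⟨hp1, hp2⟩ := hp
    rw [mem_Ioi] at hp1
    have hsymm : polarCoord.symm p = (p.1 * Real.cos p.2, p.1 * Real.sin p.2) :=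
      polarCoord_symm_apply p
    have hnorm : Real.sqrt ((polarCoord.symm p).1 * (polarCoord.symm p).1 +
        (polarCoord.symm p).2 * (polarCoord.symm p).2) = p.1 := by
      rw [hsymm]
      have : p.1 * Real.cos p.2 * (p.1 * Real.cos p.2) +
          p.1 * Real.sin p.2 * (p.1 * Real.sin p.2) = p.1 ^ 2 := by
        have := Real.sin_sq_add_cos_sq p.2; nlinarith
      rw [this, Real.sqrt_sq hp1.le]
    rw [B_det]
    by_cases hlt : p.1 < 1
    · have hmemS : polarCoord.symm p ∈ S := by rw [hS, mem_setOf_eq, hnorm]; exact hlt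
      rw [hh, indicator_of_mem hmemS, hnorm, hq, indicator_of_mem (mem_Ioo.2 ⟨hp1, hlt⟩)]
      simp [abs_of_pos hp1, smul_eq_mul]
    · have hmemS : polarCoord.symm p ∉ S := by rw [hS, mem_setOf_eq, hnorm]; exact hlt
      rw [hh, indicator_of_notMem hmemS, hq, indicator_of_notMem (by
        simp only [mem_Ioo, not_and]; intro _; exact hlt)]
      simp
  -- step 5 : change of variables
  have himg : IntegrableOn h (polarCoord.symm '' polarCoord.target) := by
    rw [integrableOn_image_iff_integrableOn_abs_det_fderiv_smul volume
      polarCoord.open_target.measurableSet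
      (fun p _ => (hasFDerivAt_polarCoord_symm p).hasFDerivWithinAt)
      (polarCoord.symm.injOn) h]
    exact hF
  rw [polarCoord.symm_image_target_eq_source] at himg
  -- step 6 : h is integrable on the whole plane
  have hplane : Integrable h := by
    rw [← integrableOn_univ, IntegrableOn,
      ← Measure.restrict_congr_set polarCoord_source_ae_eq_univ]
    exact himg
  -- step 7 : pull back to ℂ
  have hC : Integrable (h ∘ Complex.measurableEquivRealProd) :=
    (Complex.volume_preserving_equiv_real_prod.integrable_comp_emb
      Complex.measurableEquivRealProd.measurableEmbedding).2 hplane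
  -- step 8 : identify with the indicator of the disk
  have hcomp : h ∘ Complex.measurableEquivRealProd
      = unitDisk.indicator (fun z : ℂ => ω ‖z‖) := by
    funext z
    have he : (Complex.measurableEquivRealProd z) = (z.re, z.im) :=
      Complex.measurableEquivRealProd_apply z
    have hmem : (Complex.measurableEquivRealProd z) ∈ S ↔ z ∈ unitDisk := by
      rw [he, hS]; simp only [mem_setOf_eq, sqrt_norm_key]; rfl
    by_cases hz : z ∈ unitDisk
    · rw [Function.comp_apply, hh, indicator_of_mem (hmem.2 hz), indicator_of_mem hz, he]
      simp [sqrt_norm_key]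
    · rw [Function.comp_apply, hh, indicator_of_notMem (fun h' => hz (hmem.1 h')),
        indicator_of_notMem hz]
  rw [hcomp] at hC
  exact (integrable_indicator_iff isOpen_unitDisk.measurableSet).1 hC

/-- For an analytic self-map `φ` of the unit disk with
`ρ := ‖φ‖_∞ < 1`: `φ` is a symbol for `H_ω` iff `φ ∈ H_ω`, and in that case
`‖φ^k‖² ≤ ρ^{2k} (1 + k² ρ^{-2}) ‖φ‖²` for every `k ≥ 1`. -/
theorem symbol_iff_mem_and_power_bound
    (ω : ℝ → ℝ)
    (hω_cont : ContinuousOn ω (Set.Ico 0 1))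
    (hω_pos : ∀ r ∈ Set.Ico (0:ℝ) 1, 0 < ω r)
    (hω_int : IntegrableOn ω (Set.Ico 0 1))
    (φ : ℂ → ℂ)
    (hφ_diff : DifferentiableOn ℂ φ unitDisk)
    (hφ_maps : Set.MapsTo φ unitDisk unitDisk)
    (ρ : ℝ) (hρ_lub : IsLUB ((fun z => ‖φ z‖) '' unitDisk) ρ) (hρ_lt : ρ < 1) :
    ((∀ f : ℂ → ℂ, memHw ω f → memHw ω (f ∘ φ)) ↔ memHw ω φ) ∧
      (memHw ω φ → ∀ k : ℕ, 1 ≤ k →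
        hwNormSq ω (fun z => φ z ^ k)
          ≤ ρ ^ (2 * k) * (1 + (k : ℝ) ^ 2 * (ρ ^ 2)⁻¹) * hwNormSq ω φ) := by
  have hD : IsOpen unitDisk := isOpen_unitDisk
  have hDm : MeasurableSet unitDisk := hD.measurableSet
  have h0D : (0:ℂ) ∈ unitDisk := by simp [unitDisk]
  have hbd : ∀ z ∈ unitDisk, ‖φ z‖ ≤ ρ := fun z hz => hρ_lub.1 ⟨z, hz, rfl⟩
  have hρ0 : 0 ≤ ρ := le_trans (norm_nonneg _) (hbd 0 h0D)
  have hωnn : ∀ z : ℂ, z ∈ unitDisk → 0 ≤ ω ‖z‖ := fun z hz =>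
    (hω_pos _ ⟨norm_nonneg z, hz⟩).le
  have hφcont : ContinuousOn φ unitDisk := hφ_diff.continuousOn
  have hφ'cont : ContinuousOn (deriv φ) unitDisk :=
    ((hφ_diff.analyticOnNhd hD).deriv).continuousOn
  have hωcontD : ContinuousOn (fun z : ℂ => ω ‖z‖) unitDisk :=
    hω_cont.comp continuous_norm.continuousOn (fun z hz => ⟨norm_nonneg z, hz⟩)
  constructor
  · constructor
    · intro H
      have hid : memHw ω (fun z : ℂ => z) := by
        refine ⟨differentiableOn_id, ?_⟩
        have heq : (fun z : ℂ => ‖deriv (fun x : ℂ => x) z‖ ^ 2 * ω ‖z‖)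
            = fun z : ℂ => ω ‖z‖ := by
          funext z; simp
        rw [IntegrableOn, heq]
        exact integrableOn_omega_disk ω hω_int
      exact H (fun z => z) hid
    · intro hφmem f hf
      have hfd : ∀ z ∈ unitDisk, DifferentiableAt ℂ f (φ z) := fun z hz =>
        (hf.1 _ (hφ_maps hz)).differentiableAt (hD.mem_nhds (hφ_maps hz))
      have hφd : ∀ z ∈ unitDisk, DifferentiableAt ℂ φ z := fun z hz =>
        (hφ_diff z hz).differentiableAt (hD.mem_nhds hz)
      have hchain : ∀ z ∈ unitDisk, deriv (f ∘ φ) z = deriv f (φ z) * deriv φ z :=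
        fun z hz => deriv_comp z (hfd z hz) (hφd z hz)
      have hball : Metric.closedBall (0:ℂ) ρ ⊆ unitDisk := fun z hz =>
        lt_of_le_of_lt (mem_closedBall_zero_iff.1 hz) hρ_lt
      have hf'cont : ContinuousOn (deriv f) unitDisk :=
        ((hf.1.analyticOnNhd hD).deriv).continuousOn
      obtain ⟨C, hC⟩ := (isCompact_closedBall (0:ℂ) ρ).exists_bound_of_continuousOn
        (hf'cont.mono hball)
      refine ⟨fun z hz => ((hfd z hz).comp z (hφd z hz)).differentiableWithinAt, ?_⟩
      have hcont : ContinuousOn (fun z => ‖deriv (f ∘ φ) z‖ ^ 2 * ω ‖z‖) unitDisk := by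
        apply ContinuousOn.congr
          ((((hf'cont.comp hφcont hφ_maps).mul hφ'cont).norm.pow 2).mul hωcontD)
        intro z hz
        simp only [hchain z hz, Function.comp_apply, Pi.mul_apply, Pi.pow_apply]
      apply Integrable.mono' (hφmem.2.const_mul (C ^ 2)) (hcont.aestronglyMeasurable hDm)
      filter_upwards [ae_restrict_mem hDm] with z hz
      rw [Real.norm_of_nonneg (mul_nonneg (by positivity) (hωnn z hz))]
      rw [hchain z hz, norm_mul, mul_pow, mul_assoc]
      have h2 : ‖deriv f (φ z)‖ ^ 2 ≤ C ^ 2 :=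
        pow_le_pow_left₀ (norm_nonneg _) (hC _ (mem_closedBall_zero_iff.2 (hbd z hz))) 2
      exact mul_le_mul_of_nonneg_right h2
        (mul_nonneg (by positivity) (hωnn z hz))
  · intro hφmem k hk
    have hπ : (0:ℝ) < Real.pi := Real.pi_pos
    have hJnn : 0 ≤ ∫ z in unitDisk, ‖deriv φ z‖ ^ 2 * ω ‖z‖ :=
      setIntegral_nonneg hDm fun z hz => mul_nonneg (by positivity) (hωnn z hz)
    have hhwnn : 0 ≤ hwNormSq ω φ := by
      have : hwNormSq ω φ = ‖φ 0‖ ^ 2 + (∫ z in unitDisk, ‖deriv φ z‖ ^ 2 * ω ‖z‖) / Real.pi := rfl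
      rw [this]; positivity
    rcases eq_or_lt_of_le hρ0 with hρz | hρpos
    · -- ρ = 0 : everything vanishes
      have hzero : ∀ z ∈ unitDisk, φ z = 0 := fun z hz =>
        norm_le_zero_iff.1 ((hbd z hz).trans_eq hρz.symm)
      have hder0 : ∀ z ∈ unitDisk, deriv (fun w => φ w ^ k) z = 0 := by
        intro z hz
        have hev : (fun w => φ w ^ k) =ᶠ[nhds z] fun _ => (0:ℂ) := by
          filter_upwards [hD.mem_nhds hz] with w hw
          rw [hzero w hw, zero_pow (by omega : k ≠ 0)]
        rw [hev.deriv_eq, deriv_const]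
      have hLHS : hwNormSq ω (fun z => φ z ^ k) = 0 := by
        have h2 : (∫ z in unitDisk, ‖deriv (fun w => φ w ^ k) z‖ ^ 2 * ω ‖z‖) = 0 := by
          calc (∫ z in unitDisk, ‖deriv (fun w => φ w ^ k) z‖ ^ 2 * ω ‖z‖)
              = ∫ _z in unitDisk, (0:ℝ) :=
                setIntegral_congr_fun hDm (fun z hz => by rw [hder0 z hz]; simp)
            _ = 0 := by simp
        show ‖(fun z : ℂ => φ z ^ k) 0‖ ^ 2
            + (∫ z in unitDisk, ‖deriv (fun w => φ w ^ k) z‖ ^ 2 * ω ‖z‖) / Real.pi = 0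
        rw [h2]
        simp [hzero 0 h0D, zero_pow (by omega : k ≠ 0)]
      rw [hLHS, ← hρz, zero_pow (by omega : 2 * k ≠ 0), zero_mul, zero_mul]
    · -- ρ > 0
      have hdpow : ∀ z ∈ unitDisk, deriv (fun w => φ w ^ k) z
          = (k:ℂ) * φ z ^ (k-1) * deriv φ z := fun z hz =>
        deriv_fun_pow ((hφ_diff z hz).differentiableAt (hD.mem_nhds hz)) k
      have hbound : ∀ z ∈ unitDisk,
          ‖deriv (fun w => φ w ^ k) z‖ ^ 2 * ω ‖z‖
            ≤ ((k:ℝ) * ρ ^ (k-1)) ^ 2 * (‖deriv φ z‖ ^ 2 * ω ‖z‖) := by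
        intro z hz
        rw [hdpow z hz]
        have h1 : ‖(k:ℂ) * φ z ^ (k-1) * deriv φ z‖
            ≤ (k:ℝ) * ρ ^ (k-1) * ‖deriv φ z‖ := by
          rw [norm_mul, norm_mul, norm_pow, Complex.norm_natCast]
          gcongr
          exact hbd z hz
        have h2 := pow_le_pow_left₀ (norm_nonneg _) h1 2
        calc ‖(k:ℂ) * φ z ^ (k-1) * deriv φ z‖ ^ 2 * ω ‖z‖
            ≤ ((k:ℝ) * ρ ^ (k-1) * ‖deriv φ z‖) ^ 2 * ω ‖z‖ :=
              mul_le_mul_of_nonneg_right h2 (hωnn z hz)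
          _ = ((k:ℝ) * ρ ^ (k-1)) ^ 2 * (‖deriv φ z‖ ^ 2 * ω ‖z‖) := by ring
      have hcont : ContinuousOn
          (fun z => ‖deriv (fun w => φ w ^ k) z‖ ^ 2 * ω ‖z‖) unitDisk := by
        have hcont' : ContinuousOn
            (fun z : ℂ => ‖(k:ℂ) * φ z ^ (k-1) * deriv φ z‖ ^ 2 * ω ‖z‖) unitDisk :=
          (((continuousOn_const.mul (hφcont.pow (k-1))).mul hφ'cont).norm.pow 2).mul hωcontD
        apply ContinuousOn.congr hcont'
        intro z hz
        simp only [hdpow z hz]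
      have hint : IntegrableOn
          (fun z => ‖deriv (fun w => φ w ^ k) z‖ ^ 2 * ω ‖z‖) unitDisk := by
        apply Integrable.mono' (hφmem.2.const_mul (((k:ℝ) * ρ ^ (k-1)) ^ 2))
          (hcont.aestronglyMeasurable hDm)
        filter_upwards [ae_restrict_mem hDm] with z hz
        rw [Real.norm_of_nonneg (mul_nonneg (by positivity) (hωnn z hz))]
        exact hbound z hz
      have hIle : (∫ z in unitDisk, ‖deriv (fun w => φ w ^ k) z‖ ^ 2 * ω ‖z‖)
          ≤ ((k:ℝ) * ρ ^ (k-1)) ^ 2 * ∫ z in unitDisk, ‖deriv φ z‖ ^ 2 * ω ‖z‖ := by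
        rw [← integral_const_mul]
        exact setIntegral_mono_on hint (hφmem.2.const_mul _) hDm hbound
      have hfirst : ‖φ 0 ^ k‖ ^ 2 ≤ ((k:ℝ) * ρ ^ (k-1)) ^ 2 * ‖φ 0‖ ^ 2 := by
        rw [norm_pow]
        have hk1 : ‖φ 0‖ ^ k = ‖φ 0‖ ^ (k-1) * ‖φ 0‖ := by
          conv_lhs => rw [← Nat.sub_add_cancel hk]
          rw [pow_succ]
        rw [hk1, mul_pow]
        have h3 : ‖φ 0‖ ^ (k-1) ≤ ρ ^ (k-1) :=
          pow_le_pow_left₀ (norm_nonneg _) (hbd 0 h0D) _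
        have hk2 : (1:ℝ) ≤ (k:ℝ) := by exact_mod_cast hk
        have h4 : (‖φ 0‖ ^ (k-1)) ^ 2 ≤ ((k:ℝ) * ρ ^ (k-1)) ^ 2 := by
          have h5 : ρ ^ (k-1) ≤ (k:ℝ) * ρ ^ (k-1) := by
            nlinarith [pow_nonneg hρ0 (k-1)]
          nlinarith [pow_nonneg (norm_nonneg (φ 0)) (k-1), pow_nonneg hρ0 (k-1)]
        exact mul_le_mul_of_nonneg_right h4 (by positivity)
      have hLHSle : hwNormSq ω (fun z => φ z ^ k)
          ≤ ((k:ℝ) * ρ ^ (k-1)) ^ 2 * hwNormSq ω φ := by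
        have e1 : hwNormSq ω (fun z => φ z ^ k) = ‖φ 0 ^ k‖ ^ 2
            + (∫ z in unitDisk, ‖deriv (fun w => φ w ^ k) z‖ ^ 2 * ω ‖z‖) / Real.pi := rfl
        have e2 : hwNormSq ω φ = ‖φ 0‖ ^ 2
            + (∫ z in unitDisk, ‖deriv φ z‖ ^ 2 * ω ‖z‖) / Real.pi := rfl
        rw [e1, e2, mul_add, ← mul_div_assoc]
        refine add_le_add hfirst ?_
        gcongr
      have hρne : ρ ≠ 0 := ne_of_gt hρpos
      have hkey : ρ ^ (2*k) * (ρ^2)⁻¹ = (ρ ^ (k-1)) ^ 2 := by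
        rw [← pow_mul]
        have h2k : 2 * k = (k-1) * 2 + 2 := by omega
        rw [h2k, pow_add]
        field_simp
      have hcoef : ((k:ℝ) * ρ ^ (k-1)) ^ 2 ≤ ρ ^ (2*k) * (1 + (k:ℝ)^2 * (ρ^2)⁻¹) := by
        have e3 : ρ ^ (2*k) * (1 + (k:ℝ)^2 * (ρ^2)⁻¹)
            = ρ ^ (2*k) + (k:ℝ)^2 * (ρ ^ (2*k) * (ρ^2)⁻¹) := by ring
        have e4 : ((k:ℝ) * ρ ^ (k-1)) ^ 2 = (k:ℝ)^2 * (ρ ^ (k-1)) ^ 2 := by ring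
        rw [e3, hkey, e4]
        nlinarith [pow_nonneg hρ0 (2*k)]
      calc hwNormSq ω (fun z => φ z ^ k)
          ≤ ((k:ℝ) * ρ ^ (k-1)) ^ 2 * hwNormSq ω φ := hLHSle
        _ ≤ ρ ^ (2*k) * (1 + (k:ℝ)^2 * (ρ^2)⁻¹) * hwNormSq ω φ :=
            mul_le_mul_of_nonneg_right hcoef hhwnn


end
end

section
/- Let K be a compact subset of the unit disk D and let K* = { |z| : z ∈ K }. Then V(K) ≤ V(K*); equivalently, the Green capacity in D satisfies capa(K*) ≤ capa(K). -/
open MeasureTheory Set Filter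
open scoped ENNReal NNReal

noncomputable section

-- Auxiliary lemmas ---------------------------------------------------------

theorem aux_greenFnE_measurable : Measurable (Function.uncurry greenFnE) := by
  unfold Function.uncurry greenFnE
  apply Measurable.ite
  · exact measurableSet_eq_fun measurable_fst measurable_snd
  · exact measurable_const
  · apply Measurable.ennreal_ofReal
    apply Real.measurable_log.comp
    apply Measurable.norm
    apply Measurable.div
    · exact (measurable_const.sub ((Complex.continuous_conj.measurable.comp measurable_snd).mul measurable_fst))
    · exact measurable_fst.sub measurable_snd

theorem key (z w : ℂ) (hz : ‖z‖ < 1) (hw : ‖w‖ < 1) :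
    ‖1 - (starRingEnd ℂ) w * z‖ * |‖z‖ - ‖w‖| ≤ (1 - ‖w‖ * ‖z‖) * ‖z - w‖ := by
  set a := z.re; set b := z.im; set c := w.re; set d := w.im
  set r := ‖z‖ with hr; set s := ‖w‖ with hs
  have hr0 : 0 ≤ r := norm_nonneg z
  have hs0 : 0 ≤ s := norm_nonneg w
  have hr2 : r^2 = a^2 + b^2 := by
    rw [hr, ← Complex.normSq_eq_norm_sq, Complex.normSq_apply]; ring
  have hs2 : s^2 = c^2 + d^2 := by
    rw [hs, ← Complex.normSq_eq_norm_sq, Complex.normSq_apply]; ring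
  have hu : a*c + b*d ≤ r * s := by
    have h2 := Complex.abs_re_le_norm ((starRingEnd ℂ) w * z)
    have hre : ((starRingEnd ℂ) w * z).re = a*c + b*d := by
      simp [Complex.mul_re, Complex.conj_re, Complex.conj_im]; ring
    have habs : ‖(starRingEnd ℂ) w * z‖ = s * r := by
      simp [hr, hs]
    calc a*c+b*d ≤ |((starRingEnd ℂ) w * z).re| := by rw [hre]; exact le_abs_self _
    _ ≤ s * r := by rw [← habs]; exact h2
    _ = r * s := mul_comm s r
  have hnum : ‖1 - (starRingEnd ℂ) w * z‖^2 = (1 - (a*c+b*d))^2 + (b*c - a*d)^2 := by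
    rw [← Complex.normSq_eq_norm_sq, Complex.normSq_apply]
    simp [Complex.mul_re, Complex.mul_im, Complex.conj_re, Complex.conj_im]
    ring
  have hden : ‖z - w‖^2 = (a-c)^2 + (b-d)^2 := by
    rw [← Complex.normSq_eq_norm_sq, Complex.normSq_apply]
    simp; ring
  have hR : r^2 < 1 := by nlinarith
  have hS : s^2 < 1 := by nlinarith
  have hA1 : 0 <= 1 - (a^2+b^2) := by rw [<- hr2]; linarith
  have hS1 : 0 <= 1 - (c^2+d^2) := by rw [<- hs2]; linarith
  have hprod : 0 <= (r*s - (a*c+b*d)) * ((1-(a^2+b^2)) * (1-(c^2+d^2))) :=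
    mul_nonneg (sub_nonneg.2 hu) (mul_nonneg hA1 hS1)
  have E : (1-s*r)^2*((a-c)^2+(b-d)^2) - ((1-(a*c+b*d))^2+(b*c-a*d)^2)*(r-s)^2
      = 2*((r*s-(a*c+b*d))*((1-(a^2+b^2))*(1-(c^2+d^2)))) := by
    linear_combination (- 1 + d^2*s^2 + c^2*s^2 + 2*b*d - 2*b*d*s^2 + b^2*s^2 - b^2*d^2 - b^2*c^2 + 2*a*c - 2*a*c*s^2 + a^2*s^2 - a^2*d^2 - a^2*c^2) * hr2 + (- 1 + 2*b*d - 2*b^3*d + b^4 + 2*a*c - 2*a*b^2*c - 2*a^2*b*d + 2*a^2*b^2 - 2*a^3*c + a^4) * hs2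
  have hsq : (‖1 - (starRingEnd ℂ) w * z‖ * |r - s|)^2 ≤ ((1 - s*r) * ‖z - w‖)^2 := by
    rw [mul_pow, mul_pow, hnum, hden, sq_abs]
    linarith [hprod, E]
  have h1 : 0 ≤ ‖1 - (starRingEnd ℂ) w * z‖ * |r - s| := by positivity
  have h2 : 0 ≤ (1 - s*r) * ‖z - w‖ := by
    apply mul_nonneg _ (norm_nonneg _); nlinarith
  exact (pow_le_pow_iff_left₀ h1 h2 two_ne_zero).1 hsq

theorem greenFnE_mono (z w : ℂ) (hz : ‖z‖ < 1) (hw : ‖w‖ < 1) :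
    greenFnE z w ≤ greenFnE (‖z‖:ℂ) (‖w‖:ℂ) := by
  unfold greenFnE
  by_cases h : (‖z‖:ℂ) = (‖w‖:ℂ)
  · rw [if_pos h]; exact le_top
  · rw [if_neg h]
    have hzw : z ≠ w := fun hzw => h (by rw [hzw])
    rw [if_neg hzw]
    have hrs : ‖z‖ ≠ ‖w‖ := fun he => h (by rw [he])
    have hzw' : z - w ≠ 0 := sub_ne_zero.2 hzw
    have hsr1 : ‖w‖ * ‖z‖ < 1 := by
      nlinarith [norm_nonneg z, norm_nonneg w]
    apply ENNReal.ofReal_le_ofReal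
    have hx : (0:ℝ) < ‖(1 - (starRingEnd ℂ) w * z) / (z - w)‖ := by
      rw [norm_div]
      apply div_pos _ (norm_pos_iff.2 hzw')
      rw [norm_pos_iff]
      intro h0
      have h1 : (1:ℂ) = (starRingEnd ℂ) w * z := by linear_combination h0
      have h2 : ‖(1:ℂ)‖ = ‖w‖ * ‖z‖ := by rw [h1, norm_mul, RCLike.norm_conj]
      rw [norm_one] at h2; linarith
    apply Real.log_le_log hx
    rw [norm_div, norm_div]
    rw [div_le_div_iff₀ (norm_pos_iff.2 hzw') (norm_pos_iff.2 (sub_ne_zero.2 h))]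
    have e1 : ‖1 - (starRingEnd ℂ) (‖w‖:ℂ) * (‖z‖:ℂ)‖ = 1 - ‖w‖ * ‖z‖ := by
      rw [Complex.conj_ofReal]
      rw [show (1:ℂ) - (‖w‖:ℂ) * (‖z‖:ℂ) = ((1 - ‖w‖*‖z‖ : ℝ) : ℂ) by push_cast; ring]
      rw [Complex.norm_real, Real.norm_eq_abs, abs_of_pos (by linarith)]
    have e2 : ‖(‖z‖:ℂ) - (‖w‖:ℂ)‖ = |‖z‖ - ‖w‖| := by
      rw [show (‖z‖:ℂ) - (‖w‖:ℂ) = ((‖z‖-‖w‖ : ℝ) : ℂ) by push_cast; ring]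
      rw [Complex.norm_real, Real.norm_eq_abs]
    rw [e1, e2]
    exact key z w hz hw

set_option maxHeartbeats 1000000 in
theorem exists_selection (K : Set ℂ) (hK : IsCompact K) :
    ∃ φ : ℂ → ℂ, Measurable φ ∧ ∀ z ∈ K, φ ((‖z‖:ℂ)) ∈ K ∧ ‖φ ((‖z‖:ℂ))‖ = ‖z‖ := by
  classical
  set S : ℝ → Set ℝ := fun r => {t | t ∈ Icc 0 (2*Real.pi) ∧ (r:ℂ) * Complex.exp ((t:ℂ)*Complex.I) ∈ K} with hS
  set θ : ℝ → ℝ := fun r => sInf (S r) with hθ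
  have hScl : ∀ r, IsClosed (S r) := by
    intro r
    apply IsClosed.inter isClosed_Icc
    exact IsClosed.preimage (by fun_prop) hK.isClosed
  have hSbdd : ∀ r, BddBelow (S r) := fun r => ⟨0, fun t ht => ht.1.1⟩
  have hSnn : ∀ r t, t ∈ S r → 0 ≤ t := fun r t ht => ht.1.1
  set E : ℝ → Set ℝ := fun a => {r : ℝ | ∃ t, t ∈ Icc 0 (2*Real.pi) ∧ t ≤ a ∧ (r:ℂ) * Complex.exp ((t:ℂ)*Complex.I) ∈ K} with hE
  have hEcl : ∀ a, IsClosed (E a) := by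
    intro a
    haveI : CompactSpace (Icc (0:ℝ) (2*Real.pi)) := isCompact_iff_compactSpace.mp isCompact_Icc
    have himg : E a = Prod.snd '' {p : (Icc (0:ℝ) (2*Real.pi)) × ℝ |
        (p.1 : ℝ) ≤ a ∧ ((p.2:ℝ):ℂ) * Complex.exp (((p.1:ℝ):ℂ)*Complex.I) ∈ K} := by
      ext r
      constructor
      · rintro ⟨t, ht1, ht2, ht3⟩
        exact ⟨(⟨t, ht1⟩, r), ⟨ht2, ht3⟩, rfl⟩
      · rintro ⟨⟨t, r'⟩, ⟨h1, h2⟩, rfl⟩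
        exact ⟨t, t.2, h1, h2⟩
    rw [himg]
    apply isClosedMap_snd_of_compactSpace
    apply IsClosed.inter
    · exact isClosed_le (continuous_subtype_val.comp continuous_fst) continuous_const
    · exact IsClosed.preimage
        ((Complex.continuous_ofReal.comp continuous_snd).mul
          (Complex.continuous_exp.comp
            ((Complex.continuous_ofReal.comp (continuous_subtype_val.comp continuous_fst)).mul
              continuous_const))) hK.isClosed
  have hmemE : ∀ a r, r ∈ E a → θ r ≤ a := by
    rintro a r ⟨t, ht1, ht2, ht3⟩
    exact le_trans (csInf_le (hSbdd r) ⟨ht1, ht3⟩) ht2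
  have hNonθ : ∀ r, (S r).Nonempty → θ r ∈ S r := fun r hne => (hScl r).csInf_mem hne (hSbdd r)
  have hθmeas : Measurable θ := by
    apply measurable_of_Iic
    intro x
    by_cases hx : 0 ≤ x
    · have : θ ⁻¹' Iic x = E x ∪ (E (2*Real.pi))ᶜ := by
        ext r
        simp only [mem_preimage, mem_Iic, mem_union, mem_compl_iff]
        constructor
        · intro hr
          by_cases hne : (S r).Nonempty
          · left
            have := hNonθ r hne
            exact ⟨θ r, this.1, hr, this.2⟩
          · right
            rintro ⟨t, ht1, _, ht3⟩
            exact hne ⟨t, ht1, ht3⟩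
        · rintro (hr | hr)
          · exact hmemE x r hr
          · have hempty : S r = ∅ := by
              rw [← not_nonempty_iff_eq_empty]
              rintro ⟨t, ht1, ht3⟩
              exact hr ⟨t, ht1, ht1.2, ht3⟩
            show sInf (S r) ≤ x
            rw [hempty, Real.sInf_empty]
            exact hx
      rw [this]
      exact ((hEcl x).measurableSet.union (hEcl (2*Real.pi)).measurableSet.compl)
    · have : θ ⁻¹' Iic x = E x := by
        ext r
        simp only [mem_preimage, mem_Iic]
        constructor
        · intro hr
          exfalso
          by_cases hne : (S r).Nonempty
          · exact hx (le_trans (hSnn r _ (hNonθ r hne)) hr)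
          · rw [not_nonempty_iff_eq_empty] at hne
            have : θ r = 0 := by show sInf (S r) = 0; rw [hne, Real.sInf_empty]
            rw [this] at hr; exact hx hr
        · exact hmemE x r
      rw [this]
      exact (hEcl x).measurableSet
  refine ⟨fun z => ((‖z‖:ℝ):ℂ) * Complex.exp (((θ ‖z‖ : ℝ):ℂ)*Complex.I), ?_, ?_⟩
  · apply Measurable.mul
    · exact Complex.measurable_ofReal.comp measurable_norm
    · exact Complex.continuous_exp.measurable.comp
        ((Complex.measurable_ofReal.comp (hθmeas.comp measurable_norm)).mul measurable_const)
  · intro z hz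
    have hnr : ‖((‖z‖:ℝ):ℂ)‖ = ‖z‖ := by
      rw [Complex.norm_real, Real.norm_eq_abs, abs_of_nonneg (norm_nonneg z)]
    have hne : (S ‖z‖).Nonempty := by
      rcases le_or_gt 0 (Complex.arg z) with h | h
      · refine ⟨Complex.arg z, ⟨h, ?_⟩, ?_⟩
        · linarith [Complex.arg_le_pi z, Real.pi_pos]
        · have he : ((‖z‖:ℝ):ℂ) * Complex.exp ((Complex.arg z : ℂ) * Complex.I) = z := by
            exact Complex.norm_mul_exp_arg_mul_I z
          rw [he]; exact hz
      · refine ⟨Complex.arg z + 2*Real.pi, ⟨by linarith [Complex.neg_pi_lt_arg z, Real.pi_pos], by linarith⟩, ?_⟩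
        have : (((Complex.arg z + 2*Real.pi : ℝ)):ℂ) * Complex.I
            = (Complex.arg z : ℂ) * Complex.I + 2*Real.pi*Complex.I := by push_cast; ring
        rw [this, Complex.exp_add, Complex.exp_two_pi_mul_I, mul_one]
        have he : ((‖z‖:ℝ):ℂ) * Complex.exp ((Complex.arg z : ℂ) * Complex.I) = z := by
          exact Complex.norm_mul_exp_arg_mul_I z
        rw [he]; exact hz
    have hmem := hNonθ _ hne
    constructor
    · simpa only [hnr] using hmem.2
    · show ‖((‖((‖z‖:ℝ):ℂ)‖ : ℝ):ℂ) * Complex.exp (((θ ‖((‖z‖:ℝ):ℂ)‖ : ℝ):ℂ)*Complex.I)‖ = ‖z‖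
      rw [hnr, norm_mul, hnr, Complex.norm_exp_ofReal_mul_I, mul_one]


/-- For `K` compact in the unit disk and `K* = {|z| : z ∈ K}`, one has
`V(K) ≤ V(K*)`, equivalently `capa(K*) ≤ capa(K)`. -/
theorem greenV_le_greenV_abs_image
    (K : Set ℂ) (hK : IsCompact K) (hKD : K ⊆ unitDisk) :
    greenV K ≤ greenV ((fun z : ℂ => (‖z‖ : ℂ)) '' K) ∧
      greenCapa ((fun z : ℂ => (‖z‖ : ℂ)) '' K) ≤ greenCapa K := by
  have hcapa : greenV K ≤ greenV ((fun z : ℂ => (‖z‖ : ℂ)) '' K) := by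
    set Kstar := (fun z : ℂ => (‖z‖ : ℂ)) '' K with hKstar
    refine le_iInf fun μ => le_iInf fun hμ => le_iInf fun hsupp => ?_
    obtain ⟨C, hCsub, hCcomp, hCnull⟩ := hsupp
    obtain ⟨φ, hφmeas, hφsel⟩ := exists_selection K hK
    set ν := μ.map φ with hν
    haveI : IsProbabilityMeasure ν := Measure.isProbabilityMeasure_map hφmeas.aemeasurable
    have hφC : ∀ r ∈ C, φ r ∈ K ∧ (‖φ r‖ : ℂ) = r := by
      intro r hr
      obtain ⟨z, hzK, hz⟩ := hCsub hr
      obtain ⟨h1, h2⟩ := hφsel z hzK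
      simp only at hz
      subst hz
      exact ⟨h1, by rw [h2]⟩
    have hνK : ν Kᶜ = 0 := by
      rw [hν, Measure.map_apply hφmeas hK.isClosed.measurableSet.compl]
      apply measure_mono_null _ hCnull
      intro r hr hrC
      exact hr ((hφC r hrC).1)
    have hae : ∀ᵐ r ∂μ, r ∈ C := mem_ae_iff.mpr hCnull
    have hG := aux_greenFnE_measurable
    have hEle : greenEnergy ν ≤ greenEnergy μ := by
      have hH : Measurable fun z => ∫⁻ w, greenFnE z w ∂ν :=
        Measurable.lintegral_prod_right hG
      have step1 : greenEnergy ν = ∫⁻ r, ∫⁻ s, greenFnE (φ r) (φ s) ∂μ ∂μ := by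
        unfold greenEnergy
        rw [hν, lintegral_map hH hφmeas]
        congr 1
        ext r
        exact lintegral_map (hG.comp (measurable_prodMk_left)) hφmeas
      rw [step1]
      unfold greenEnergy
      apply lintegral_mono_ae
      filter_upwards [hae] with r hr
      apply lintegral_mono_ae
      filter_upwards [hae] with s hs
      obtain ⟨hrK, hrEq⟩ := hφC r hr
      obtain ⟨hsK, hsEq⟩ := hφC s hs
      calc greenFnE (φ r) (φ s) ≤ greenFnE ((‖φ r‖:ℝ):ℂ) ((‖φ s‖:ℝ):ℂ) :=
            greenFnE_mono (φ r) (φ s) (hKD hrK) (hKD hsK)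
      _ = greenFnE r s := by rw [hrEq, hsEq]
    calc greenV K ≤ greenEnergy ν := by
          apply iInf_le_of_le ν
          apply iInf_le_of_le ‹IsProbabilityMeasure ν›
          exact iInf_le _ ⟨K, Set.Subset.rfl, hK, hνK⟩
    _ ≤ greenEnergy μ := hEle
  exact ⟨hcapa, ENNReal.inv_le_inv.mpr hcapa⟩

end
end
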